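/- arXiv:1805.10285 — 10 statements merged into one kernel-verified Lean document; each statement's English description precedes it below -/
import Mathlib

section
/- For a finite-dimensional evolution algebra E with structure matrix A = (a_{ij}) in a natural basis, the dimension of E² (the span of all products u·v) equals the rank of A; in particular rank A does not depend on the choice of natural basis. -/
/-- For a finite-dimensional evolution algebra `E` with structure matrix
`A = (a_{ij})` in a natural basis, `dim E²` equals `rank A`; in particular `rank A`
does not depend on the choice of natural basis. -/
theorem stmt1 {K E : Type*} [Field K] [CharZero K] [NonUnitalNonAssocRing E]
    [Module K E] [SMulCommClass K E E] [IsScalarTower K E E]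
    (n : ℕ) (e : Module.Basis (Fin n) K E) (A : Matrix (Fin n) (Fin n) K)
    (hzero : ∀ i j : Fin n, i ≠ j → e i * e j = 0)
    (hsq : ∀ i : Fin n, e i * e i = ∑ k, A i k • e k) :
    Module.finrank K ↥(Submodule.span K {z : E | ∃ x y : E, x * y = z}) = A.rank := by
  have hspan : Submodule.span K {z : E | ∃ x y : E, x * y = z}
      = Submodule.span K (Set.range fun i : Fin n => e i * e i) := by
    apply le_antisymm
    · rw [Submodule.span_le]
      rintro z ⟨x, y, rfl⟩
      have hx := e.sum_repr x
      have hy := e.sum_repr y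
      have : x * y = ∑ i, (e.repr x i * e.repr y i) • (e i * e i) := by
        conv_lhs => rw [← hx, ← hy]
        rw [Finset.sum_mul]
        rw [Finset.sum_congr rfl (fun i _ => Finset.mul_sum _ _ _)]
        rw [Finset.sum_comm]
        refine Finset.sum_congr rfl fun j _ => ?_
        rw [Finset.sum_eq_single j]
        · rw [smul_mul_assoc, mul_smul_comm, smul_smul, mul_comm]
        · intro i _ hij
          rw [smul_mul_assoc, mul_smul_comm, hzero i j hij, smul_zero, smul_zero]
        · intro h; exact absurd (Finset.mem_univ j) h
      rw [this]
      exact Submodule.sum_mem _ fun i _ =>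
        Submodule.smul_mem _ _ (Submodule.subset_span ⟨i, rfl⟩)
    · rw [Submodule.span_le]
      rintro z ⟨i, rfl⟩
      exact Submodule.subset_span ⟨e i, e i, rfl⟩
  have hcomp : (fun i : Fin n => e i * e i) = (e.equivFun.symm : (Fin n → K) →ₗ[K] E) ∘ A.row := by
    funext i
    rw [hsq i, Function.comp_apply]; exact (Module.Basis.equivFun_symm_apply e (A.row i)).symm
  rw [hspan, hcomp, Set.range_comp, Submodule.span_image,
    LinearEquiv.finrank_map_eq, Matrix.rank_eq_finrank_span_row]
end

section
/- Let E be the n-dimensional evolution algebra with e_i² = a_{i,i+1} e_{i+1} + a_{in} e_n for i < n−1, e_{n−1}² = a_{n−1,n} e_n, e_n² = 0, where a_{i,i+1} ≠ 0 for all i < n. Let E' be the evolution algebra with f_i² = f_{i+1} for i < n and f_n² = 0. Then E and E' are isomorphic as algebras. -/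
/-- Scalars `c k` with `c 0 = 1`, `c (k+1) = c k ^ 2 * A k (k+1)`. -/
noncomputable def stmt2cAx {K : Type*} [Field K] (A : ℕ → ℕ → K) : ℕ → K
  | 0 => 1
  | k+1 => stmt2cAx A k * stmt2cAx A k * A k (k+1)

/-- Scalars `d k`. -/
noncomputable def stmt2dAx {K : Type*} [Field K] (A : ℕ → ℕ → K) (m : ℕ) : ℕ → K
  | 0 => 0
  | k+1 => if k+1 = m then 0 else stmt2cAx A k * stmt2cAx A k * A k m

/-- The evolution algebra with `e_i² = a_{i,i+1} e_{i+1} + a_{in} e_n`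
(for `i < n−1`), `e_{n−1}² = a_{n−1,n} e_n`, `e_n² = 0`, with `a_{i,i+1} ≠ 0`,
is isomorphic to the evolution algebra with `f_i² = f_{i+1}` (for `i < n`), `f_n² = 0`. -/
theorem stmt2 {K E E' : Type*} [Field K] [CharZero K]
    [NonUnitalNonAssocRing E] [Module K E] [SMulCommClass K E E] [IsScalarTower K E E]
    [NonUnitalNonAssocRing E'] [Module K E'] [SMulCommClass K E' E'] [IsScalarTower K E' E']
    (n : ℕ) (hn : 2 ≤ n) (a : Fin n → Fin n → K)
    (e : Module.Basis (Fin n) K E) (f : Module.Basis (Fin n) K E')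
    (he0 : ∀ i j : Fin n, i ≠ j → e i * e j = 0)
    (hf0 : ∀ i j : Fin n, i ≠ j → f i * f j = 0)
    (he1 : ∀ i : Fin n, ∀ hi : (i : ℕ) < n - 2,
      e i * e i = a i ⟨(i : ℕ) + 1, by omega⟩ • e ⟨(i : ℕ) + 1, by omega⟩
        + a i ⟨n - 1, by omega⟩ • e ⟨n - 1, by omega⟩)
    (he2 : e ⟨n - 2, by omega⟩ * e ⟨n - 2, by omega⟩
        = a ⟨n - 2, by omega⟩ ⟨n - 1, by omega⟩ • e ⟨n - 1, by omega⟩)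
    (he3 : e ⟨n - 1, by omega⟩ * e ⟨n - 1, by omega⟩ = 0)
    (hne : ∀ i : Fin n, ∀ hi : (i : ℕ) + 1 < n, a i ⟨(i : ℕ) + 1, hi⟩ ≠ 0)
    (hf1 : ∀ i : Fin n, ∀ hi : (i : ℕ) + 1 < n, f i * f i = f ⟨(i : ℕ) + 1, hi⟩)
    (hf2 : f ⟨n - 1, by omega⟩ * f ⟨n - 1, by omega⟩ = 0) :
    ∃ ψ : E ≃ₗ[K] E', ∀ x y : E, ψ (x * y) = ψ x * ψ y := by
  have hw : n - 1 < n := by omega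
  set A : ℕ → ℕ → K := fun i j =>
    if h : i < n ∧ j < n then a ⟨i, h.1⟩ ⟨j, h.2⟩ else 0 with hA
  set c : ℕ → K := stmt2cAx A with hcdef
  set d : ℕ → K := stmt2dAx A (n-1) with hddef
  -- basic facts about c, d
  have hAval : ∀ (i j : ℕ) (hi : i < n) (hj : j < n), A i j = a ⟨i, hi⟩ ⟨j, hj⟩ := by
    intro i j hi hj; simp [hA, hi, hj]
  have hcsucc : ∀ k : ℕ, c (k+1) = c k * c k * A k (k+1) := fun k => rfl
  have hdsucc : ∀ k : ℕ, k + 1 ≠ n - 1 → d (k+1) = c k * c k * A k (n-1) := by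
    intro k hk; simp [hddef, stmt2dAx, hk]; exact Or.inl rfl
  have hd0 : d 0 = 0 := rfl
  have hdm : d (n-1) = 0 := by
    obtain ⟨k, hk⟩ : ∃ k, n - 1 = k + 1 := ⟨n - 2, by omega⟩
    rw [hddef, hk]
    simp [stmt2dAx]
  have hc : ∀ k : ℕ, k < n → c k ≠ 0 := by
    intro k
    induction k with
    | zero => intro _; simp [hcdef, stmt2cAx]
    | succ k ih =>
      intro hk
      have hk' : k < n := by omega
      have := hne ⟨k, hk'⟩ hk
      rw [hcsucc, hAval k (k+1) hk' hk]
      exact mul_ne_zero (mul_ne_zero (ih hk') (ih hk')) this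
  -- the new natural basis family of E and its inverse image family
  set w : E := e ⟨n-1, hw⟩ with hwdef
  set g : Fin n → E := fun i => c i • e i + d i • w with hgdef
  set h : Fin n → E' := fun j =>
    (c j)⁻¹ • f j - ((c j)⁻¹ * d j * (c (n-1))⁻¹) • f ⟨n-1, hw⟩ with hhdef
  set φ : E' →ₗ[K] E := f.constr K g with hφdef
  set χ : E →ₗ[K] E' := e.constr K h with hχdef
  have hφf : ∀ i : Fin n, φ (f i) = g i := fun i => f.constr_basis K g i
  have hχe : ∀ j : Fin n, χ (e j) = h j := fun j => e.constr_basis K h j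
  -- products of e with w
  have hww : w * w = 0 := he3
  have hew : ∀ i : Fin n, e i * w = 0 := by
    intro i
    by_cases hi : i = ⟨n-1, hw⟩
    · rw [hi]; exact he3
    · exact he0 _ _ hi
  have hwe : ∀ i : Fin n, w * e i = 0 := by
    intro i
    by_cases hi : i = ⟨n-1, hw⟩
    · rw [hi]; exact he3
    · exact he0 _ _ (fun hh => hi hh.symm)
  have hgij : ∀ i j : Fin n, g i * g j
      = (c i * c j) • (e i * e j) + (c i * d j) • (e i * w)
        + (d i * c j) • (w * e j) + (d i * d j) • (w * w) := by
    intro i j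
    simp only [hgdef, add_mul, mul_add, smul_mul_assoc, mul_smul_comm, smul_smul]
    module
  -- χ ∘ φ = id and φ ∘ χ = id on bases
  have hχg : ∀ i : Fin n, χ (g i) = f i := by
    intro i
    have h1 : c (i : ℕ) ≠ 0 := hc _ i.isLt
    have h2 : c (n-1) ≠ 0 := hc _ hw
    rw [hgdef]
    simp only [map_add, map_smul, hwdef, hχe, hhdef]
    have hd' : d ((⟨n-1, hw⟩ : Fin n) : ℕ) = 0 := hdm
    rw [hd']
    match_scalars <;> (field_simp; try ring)
  have hφh : ∀ j : Fin n, φ (h j) = e j := by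
    intro j
    have h1 : c (j : ℕ) ≠ 0 := hc _ j.isLt
    have h2 : c (n-1) ≠ 0 := hc _ hw
    rw [hhdef]
    simp only [map_sub, map_smul, hφf, hgdef]
    have hd' : d ((⟨n-1, hw⟩ : Fin n) : ℕ) = 0 := hdm
    rw [hd']
    match_scalars <;> (field_simp; try ring)
  -- key multiplicativity on basis f
  have hmul : ∀ i j : Fin n, φ (f i * f j) = g i * g j := by
    intro i j
    by_cases hij : i = j
    · subst hij
      by_cases hi : (i : ℕ) + 1 < n
      · rw [hf1 i hi, hφf]
        have hinw : i ≠ ⟨n-1, hw⟩ := by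
          intro hh; rw [Fin.ext_iff] at hh; simp at hh; omega
        rw [hgij, hew, hwe, hww]
        simp only [smul_zero, add_zero]
        by_cases h2 : (i : ℕ) < n - 2
        · rw [he1 i h2]
          have hc1 : c ((i : ℕ)+1) = c i * c i * a i ⟨(i : ℕ)+1, hi⟩ := by
            rw [hcsucc, hAval _ _ i.isLt hi, Fin.eta]
          have hd1 : d ((i : ℕ)+1) = c i * c i * a i ⟨n-1, hw⟩ := by
            rw [hdsucc _ (by omega), hAval _ _ i.isLt hw, Fin.eta]
          rw [hgdef]
          simp only [hc1, hd1]
          rw [hwdef]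
          module
        · have hi2 : (i : ℕ) = n - 2 := by omega
          have hee : e i = e ⟨n-2, by omega⟩ := by
            congr 1; exact Fin.ext hi2
          rw [hee, he2]
          have hfin : (⟨(i:ℕ)+1, hi⟩ : Fin n) = ⟨n-1, hw⟩ := Fin.ext (by simp; omega)
          rw [hfin]
          simp only [hgdef]
          rw [hdm]
          have hc1 : c (n-1) = c (n-2) * c (n-2) * a ⟨n-2, by omega⟩ ⟨n-1, hw⟩ := by
            have h3 : n - 1 = (n-2) + 1 := by omega
            conv_lhs => rw [h3]
            rw [hcsucc, hAval _ _ (by omega) (by omega)]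
            congr 2
            exact Fin.ext (by simp; omega)
          have hwe' : e (⟨n-1, hw⟩ : Fin n) = w := rfl
          simp only [hc1, hi2, hwe']
          module
      · have hieq : i = ⟨n-1, hw⟩ := by
          rw [Fin.ext_iff]; simp; omega
        rw [hieq, hf2, map_zero, hgij]
        have : e (⟨n-1, hw⟩ : Fin n) = w := rfl
        rw [this, hww]
        simp
    · rw [hf0 i j hij, map_zero, hgij, he0 i j hij, hew, hwe, hww]
      simp
  -- bilinear extension
  have key : ∀ u v : E', φ (u * v) = φ u * φ v := by
    have hB : (LinearMap.mul K E').compr₂ φ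
        = (LinearMap.mul K E).compl₁₂ φ φ := by
      refine f.ext fun i => f.ext fun j => ?_
      simp only [LinearMap.compr₂_apply, LinearMap.compl₁₂_apply, LinearMap.mul_apply']
      rw [hmul i j, hφf, hφf]
    intro u v
    have := LinearMap.congr_fun (LinearMap.congr_fun hB u) v
    simpa using this
  -- the equivalence
  have h1 : χ.comp φ = LinearMap.id := by
    refine f.ext fun i => ?_
    simp [hφf, hχg]
  have h2 : φ.comp χ = LinearMap.id := by
    refine e.ext fun j => ?_
    simp [hχe, hφh]
  have h1' : ∀ u : E', χ (φ u) = u := fun u => LinearMap.congr_fun h1 u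
  have h2' : ∀ x : E, φ (χ x) = x := fun x => LinearMap.congr_fun h2 x
  refine ⟨LinearEquiv.ofLinear χ φ h1 h2, fun x y => ?_⟩
  show χ (x * y) = χ x * χ y
  conv_lhs => rw [← h2' x, ← h2' y, ← key, h1']
end

section
/- Let E be the n-dimensional evolution algebra (n > 3) with multiplication e_i² = Σ_{j=i+1}^n a_{ij} e_j for i ≤ n−1 and e_n² = 0, where a_{i,i+1} ≠ 0 for all i < n. If there exists a pair (i₀,j₀) with i₀+2 ≤ j₀ < n and a_{i₀ j₀} ≠ 0, then every derivation d of E satisfies d(e_1) = β e_n for some β ∈ K and d(e_i) = 0 for all i ≥ 2; in particular dim Der(E) = 1. -/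
/-- A derivation of a (non-associative, non-unital) `K`-algebra. -/
def IsDeriv {K E : Type*} [Field K] [NonUnitalNonAssocRing E] [Module K E]
    (d : E →ₗ[K] E) : Prop :=
  ∀ x y : E, d (x * y) = d x * y + x * d y

/-- The space of derivations, as a submodule of `End K E`. -/
def DerSubmodule (K E : Type*) [Field K] [NonUnitalNonAssocRing E]
    [Module K E] [SMulCommClass K E E] [IsScalarTower K E E] :
    Submodule K (Module.End K E) where
  carrier := {d | ∀ x y : E, d (x * y) = d x * y + x * d y}
  zero_mem' := by intro x y; simp
  add_mem' := by
    intro d₁ d₂ h₁ h₂ x y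
    simp [h₁ x y, h₂ x y, add_mul, mul_add]
    abel
  smul_mem' := by
    intro c d h x y
    simp [h x y, smul_add, smul_mul_assoc, mul_smul_comm]

set_option maxHeartbeats 1000000 in
private lemma stmt4aux {K : Type*} [Field K] [CharZero K] (n : ℕ) (hn : 3 < n)
    (a A c : Fin n → Fin n → K)
    (hAeq : ∀ i k : Fin n, (i : ℕ) < (k : ℕ) → A i k = a i k)
    (hAne : ∀ i k : Fin n, ¬ (i : ℕ) < (k : ℕ) → A i k = 0)
    (hsub : ∀ i : Fin n, ∀ hi : (i : ℕ) + 1 < n, a i ⟨(i : ℕ) + 1, hi⟩ ≠ 0)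
    (hex : ∃ i j : Fin n, (i : ℕ) + 2 ≤ (j : ℕ) ∧ (j : ℕ) < n - 1 ∧ a i j ≠ 0)
    (EqA : ∀ i j : Fin n, i ≠ j → ∀ k : Fin n, c j i * A j k + c i j * A i k = 0)
    (EqB : ∀ i k : Fin n, (∑ j, A i j * c k j) = 2 * (c i i * A i k)) :
    ∀ k i : Fin n, ¬ ((k : ℕ) = n - 1 ∧ (i : ℕ) = 0) → c k i = 0 := by
  have hn0 : 0 < n := by omega
  set N : Fin n := ⟨n - 1, by omega⟩ with hN
  -- step (a)
  have hst1 : ∀ i j : Fin n, i < j → c i j = 0 := by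
    intro i j hij
    have hi1 : (i : ℕ) + 1 < n := by omega
    have h := EqA i j (Fin.ne_of_lt hij) ⟨(i : ℕ) + 1, hi1⟩
    rw [hAne j _ (by simpa using by omega : ¬ (j:ℕ) < (i:ℕ)+1), hAeq i _ (by simp),
      mul_zero, zero_add] at h
    exact (mul_eq_zero.mp h).resolve_right (hsub i hi1)
  -- step (b)
  have hst2 : ∀ i j : Fin n, i < j → (j : ℕ) < n - 1 → c j i = 0 := by
    intro i j hij hjn
    have hj1 : (j : ℕ) + 1 < n := by omega
    have h := EqA i j (Fin.ne_of_lt hij) ⟨(j : ℕ) + 1, hj1⟩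
    rw [hst1 i j hij, zero_mul, add_zero, hAeq j _ (by simp)] at h
    exact (mul_eq_zero.mp h).resolve_right (hsub j hj1)
  -- refined EqB for k < n-1
  have EqB' : ∀ i k : Fin n, (k : ℕ) < n - 1 → A i k * c k k = 2 * (c i i * A i k) := by
    intro i k hk
    have h := EqB i k
    rw [Finset.sum_eq_single k] at h
    · exact h
    · intro j _ hjk
      rcases lt_or_gt_of_ne hjk with h1 | h1
      · rw [hst2 j k h1 hk, mul_zero]
      · rw [hst1 k j h1, mul_zero]
    · simp
  -- successor relation on the diagonal
  have hsucc : ∀ i : ℕ, (hi : i + 1 < n - 1) →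
      c ⟨i + 1, by omega⟩ ⟨i + 1, by omega⟩ = 2 * c ⟨i, by omega⟩ ⟨i, by omega⟩ := by
    intro i hi
    have h := EqB' ⟨i, by omega⟩ ⟨i + 1, by omega⟩ hi
    rw [hAeq ⟨i, by omega⟩ ⟨i + 1, by omega⟩ (show i < i + 1 by omega)] at h
    have ha : a ⟨i, by omega⟩ ⟨i + 1, by omega⟩ ≠ 0 := hsub ⟨i, by omega⟩ (by omega : i + 1 < n)
    have key : ∀ x y z : K, x ≠ 0 → x * y = 2 * (z * x) → y = 2 * z := by
      intro x y z hx hh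
      exact mul_left_cancel₀ hx (by rw [hh]; ring)
    exact key _ _ _ ha h
  have hpow : ∀ i : ℕ, i < n - 1 → ∀ hh : i < n,
      c ⟨i, hh⟩ ⟨i, hh⟩ = 2 ^ i * c ⟨0, by omega⟩ ⟨0, by omega⟩ := by
    intro i
    induction i with
    | zero => intro h hh; simp
    | succ m ih =>
      intro h hh
      rw [hsucc m h, ih (by omega) (by omega)]
      ring
  -- the extra nonzero coefficient kills the diagonal
  obtain ⟨i₀, j₀, hij2, hjn, ha0⟩ := hex
  have ht0 : c ⟨0, by omega⟩ ⟨0, by omega⟩ = 0 := by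
    have h := EqB' i₀ j₀ hjn
    rw [hAeq i₀ j₀ (by omega)] at h
    have h2 := mul_left_cancel₀ ha0 (show a i₀ j₀ * c j₀ j₀ = a i₀ j₀ * (2 * c i₀ i₀) by
      rw [h]; ring)
    have hj := hpow (j₀ : ℕ) hjn j₀.isLt
    have hi := hpow (i₀ : ℕ) (by omega) i₀.isLt
    rw [Fin.eta] at hj hi
    rw [hj, hi] at h2
    have hne : (2 : K) ^ (j₀ : ℕ) ≠ 2 ^ ((i₀ : ℕ) + 1) := by
      intro hh
      have hh2 : ((2 ^ (j₀ : ℕ) : ℕ) : K) = ((2 ^ ((i₀ : ℕ) + 1) : ℕ) : K) := by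
        push_cast; exact hh
      have hh3 := Nat.cast_injective hh2
      have := Nat.pow_right_injective (le_refl 2) hh3
      omega
    have hz : ((2 : K) ^ (j₀ : ℕ) - 2 ^ ((i₀ : ℕ) + 1)) * c ⟨0, by omega⟩ ⟨0, by omega⟩ = 0 := by
      linear_combination h2
    exact (mul_eq_zero.mp hz).resolve_left (sub_ne_zero.mpr hne)
  have htd : ∀ i : Fin n, (i : ℕ) < n - 1 → c i i = 0 := by
    intro i h
    have := hpow (i : ℕ) h i.isLt
    rw [Fin.eta, ht0, mul_zero] at this
    exact this
  -- diagonal at N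
  have htN : c N N = 0 := by
    obtain ⟨q, hq⟩ : ∃ q : Fin n, (q : ℕ) = n - 2 := ⟨⟨n - 2, by omega⟩, rfl⟩
    have h := EqB q N
    have hsum : (∑ j : Fin n, A q j * c N j) = A q N * c N N := by
      refine Finset.sum_eq_single_of_mem N (Finset.mem_univ N) ?_
      intro j _ hjN
      rw [hAne q j (by
        have h2 : (j : ℕ) ≠ n - 1 := Fin.val_ne_of_ne hjN
        have h3 := j.isLt
        omega), zero_mul]
    rw [hsum, htd q (by omega), zero_mul, mul_zero, hAeq q N (show (q : ℕ) < n - 1 by omega)] at h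
    have hNe : a q N ≠ 0 := by
      have hqn : (q : ℕ) + 1 < n := by omega
      have h1 : N = ⟨(q : ℕ) + 1, hqn⟩ := Fin.ext (show n - 1 = (q : ℕ) + 1 by omega)
      rw [h1]
      exact hsub q hqn
    exact (mul_eq_zero.mp h).resolve_left hNe
  -- off-diagonal last row, by downward induction
  have hbz : ∀ m : ℕ, ∀ j : Fin n, n - (j : ℕ) ≤ m → 1 ≤ (j : ℕ) → c N j = 0 := by
    intro m
    induction m with
    | zero => intro j h hj; exact absurd h (by omega)
    | succ m ih =>
      intro j hm hj
      by_cases hjN : (j : ℕ) = n - 1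
      · have hjN' : j = N := Fin.ext (show (j : ℕ) = n - 1 from hjN)
        rw [hjN']; exact htN
      · have hjlt : (j : ℕ) < n - 1 := by omega
        obtain ⟨p, hp⟩ : ∃ p : Fin n, (p : ℕ) = (j : ℕ) - 1 := ⟨⟨(j : ℕ) - 1, by omega⟩, rfl⟩
        have h := EqB p N
        have hsum : (∑ j' : Fin n, A p j' * c N j') = A p j * c N j := by
          refine Finset.sum_eq_single_of_mem j (Finset.mem_univ j) ?_
          intro j' _ hj'
          have hne := Fin.val_ne_of_ne hj'
          rcases Nat.lt_or_ge (j : ℕ) (j' : ℕ) with h1 | h1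
          · rw [ih j' (by omega) (by omega), mul_zero]
          · rw [hAne p j' (by omega), zero_mul]
        rw [hsum, htd p (by omega), zero_mul, mul_zero,
          hAeq p j (by omega)] at h
        have hNe : a p j ≠ 0 := by
          have hjn2 := j.isLt
          have hpn : (p : ℕ) + 1 < n := by omega
          have h1 : j = ⟨(p : ℕ) + 1, hpn⟩ := Fin.ext (show (j : ℕ) = (p : ℕ) + 1 by omega)
          rw [h1]
          exact hsub p hpn
        exact (mul_eq_zero.mp h).resolve_left hNe
  intro k i hki
  rcases lt_trichotomy (k : ℕ) (i : ℕ) with h1 | h1 | h1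
  · exact hst1 k i h1
  · have hki2 : k = i := Fin.ext h1
    subst hki2
    by_cases h2 : (k : ℕ) < n - 1
    · exact htd k h2
    · have hkl := k.isLt
      have hkN : k = N := Fin.ext (show (k : ℕ) = n - 1 by omega)
      rw [hkN]; exact htN
  · by_cases h2 : (k : ℕ) < n - 1
    · exact hst2 i k h1 h2
    · have hkl := k.isLt
      have hkN : k = N := Fin.ext (show (k : ℕ) = n - 1 by omega)
      rw [hkN]
      have hi1 : 1 ≤ (i : ℕ) := by
        rcases Nat.eq_zero_or_pos (i : ℕ) with h3 | h3
        · exact absurd ⟨by omega, h3⟩ hki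
        · exact h3
      exact hbz n i (by omega) hi1

set_option maxHeartbeats 8000000 in
/-- for the nilpotent evolution algebra (n > 3) with
`e_i² = Σ_{j>i} a_{ij} e_j`, `a_{i,i+1} ≠ 0`, if some `a_{i₀j₀} ≠ 0` with
`i₀+2 ≤ j₀ < n`, then every derivation `d` satisfies `d(e_1) = β e_n` and
`d(e_i) = 0` for `i ≥ 2`; in particular `dim Der(E) = 1`. -/
theorem stmt4 {K E : Type*} [Field K] [CharZero K] [NonUnitalNonAssocRing E]
    [Module K E] [SMulCommClass K E E] [IsScalarTower K E E]
    (n : ℕ) (hn : 3 < n) (a : Fin n → Fin n → K) (e : Module.Basis (Fin n) K E)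
    (hzero : ∀ i j : Fin n, i ≠ j → e i * e j = 0)
    (hsq : ∀ i : Fin n, e i * e i = ∑ j ∈ Finset.univ.filter (fun j => i < j), a i j • e j)
    (hsub : ∀ i : Fin n, ∀ hi : (i : ℕ) + 1 < n, a i ⟨(i : ℕ) + 1, hi⟩ ≠ 0)
    (hex : ∃ i j : Fin n, (i : ℕ) + 2 ≤ (j : ℕ) ∧ (j : ℕ) < n - 1 ∧ a i j ≠ 0) :
    (∀ d : Module.End K E, IsDeriv d →
        (∃ β : K, d (e ⟨0, by omega⟩) = β • e ⟨n - 1, by omega⟩) ∧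
        ∀ i : Fin n, 1 ≤ (i : ℕ) → d (e i) = 0) ∧
    Module.finrank K ↥(DerSubmodule K E) = 1 := by
  classical
  have hn0 : 0 < n := by omega
  set N : Fin n := ⟨n - 1, by omega⟩ with hN
  set A : Fin n → Fin n → K := fun i k => if i < k then a i k else 0 with hA
  have hsq' : ∀ i : Fin n, e i * e i = ∑ k, A i k • e k := by
    intro i
    rw [hsq i, Finset.sum_filter]
    refine Finset.sum_congr rfl fun k _ => ?_
    by_cases h : i < k <;> simp [hA, h]
  have hrepr : ∀ i k : Fin n, e.repr (e i * e i) k = A i k := by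
    intro i k
    rw [hsq' i]
    simp [Finsupp.single_apply]
  have hAeq : ∀ i k : Fin n, (i : ℕ) < (k : ℕ) → A i k = a i k := by
    intro i k h
    simp only [hA]
    exact if_pos h
  have hAne : ∀ i k : Fin n, ¬ (i : ℕ) < (k : ℕ) → A i k = 0 := by
    intro i k h
    simp only [hA]
    exact if_neg h
  have main : ∀ d : Module.End K E, IsDeriv d →
      (∃ β : K, d (e ⟨0, by omega⟩) = β • e ⟨n - 1, by omega⟩) ∧
      ∀ i : Fin n, 1 ≤ (i : ℕ) → d (e i) = 0 := by
    intro d hd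
    set c : Fin n → Fin n → K := fun k i => e.repr (d (e i)) k with hc
    have hde : ∀ i, d (e i) = ∑ k, c k i • e k := fun i => (e.sum_repr _).symm
    have hmul1 : ∀ i j : Fin n, d (e i) * e j = c j i • (e j * e j) := by
      intro i j
      rw [hde i, Finset.sum_mul]
      rw [Finset.sum_eq_single j]
      · rw [smul_mul_assoc]
      · intro k _ hk; rw [smul_mul_assoc, hzero k j hk, smul_zero]
      · simp
    have hmul2 : ∀ i j : Fin n, e i * d (e j) = c i j • (e i * e i) := by
      intro i j
      rw [hde j, Finset.mul_sum]
      rw [Finset.sum_eq_single i]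
      · rw [mul_smul_comm]
      · intro k _ hk; rw [mul_smul_comm, hzero i k (Ne.symm hk), smul_zero]
      · simp
    have EqA : ∀ i j : Fin n, i ≠ j → ∀ k : Fin n,
        c j i * A j k + c i j * A i k = 0 := by
      intro i j hij k
      have h0 := hd (e i) (e j)
      rw [hzero i j hij, map_zero, hmul1, hmul2] at h0
      have h1 := congrArg (fun x => e.repr x k) h0.symm
      simpa [hrepr] using h1
    have EqB : ∀ i k : Fin n, (∑ j, A i j * c k j) = 2 * (c i i * A i k) := by
      intro i k
      have h0 := hd (e i) (e i)
      rw [hmul1, hmul2] at h0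
      have h1 : d (e i * e i) = ∑ j, A i j • d (e j) := by
        rw [hsq' i, map_sum]
        simp
      rw [h1] at h0
      have h2 := congrArg (fun x => e.repr x k) h0
      simp only [map_sum, map_smul, Finsupp.coe_finset_sum, Finsupp.coe_smul,
        Finset.sum_apply, Pi.smul_apply, smul_eq_mul, map_add, Finsupp.coe_add,
        Pi.add_apply, hrepr] at h2
      rw [h2]; ring
    have hcz := stmt4aux n hn a A c hAeq hAne hsub hex EqA EqB
    have hfin : ∀ i : Fin n, 1 ≤ (i : ℕ) → d (e i) = 0 := by
      intro i hi
      rw [hde i]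
      apply Finset.sum_eq_zero
      intro k _
      rw [hcz k i (fun hh => by omega), zero_smul]
    refine ⟨⟨c N ⟨0, by omega⟩, ?_⟩, hfin⟩
    rw [hde ⟨0, by omega⟩]
    have hsum : (∑ k : Fin n, c k ⟨0, by omega⟩ • e k) = c N ⟨0, by omega⟩ • e N := by
      refine Finset.sum_eq_single_of_mem N (Finset.mem_univ N) ?_
      intro k _ hk
      rw [hcz k ⟨0, by omega⟩ (fun hh => hk (Fin.ext hh.1)), zero_smul]
    rw [hsum]
  refine ⟨main, ?_⟩
  -- the distinguished derivation d₀ : e₀ ↦ e_{n-1}, eᵢ ↦ 0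
  set d0 : Module.End K E := e.constr K (fun i => if (i : ℕ) = 0 then e N else 0) with hd0def
  have hd0 : ∀ i : Fin n, d0 (e i) = if (i : ℕ) = 0 then e N else 0 := by
    intro i
    exact e.constr_basis K _ i
  have heN : e N * e N = 0 := by
    rw [hsq N]
    apply Finset.sum_eq_zero
    intro j hj
    simp only [Finset.mem_filter] at hj
    exact absurd hj.2 (by
      have := j.isLt
      show ¬ N < j
      simp only [Fin.lt_def]
      exact Nat.not_lt.mpr (by omega : (j : ℕ) ≤ n - 1))
  have hNz : ∀ j : Fin n, e N * e j = 0 := by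
    intro j
    by_cases hj : j = N
    · rw [hj]; exact heN
    · exact hzero N j (Ne.symm hj)
  have hzN : ∀ i : Fin n, e i * e N = 0 := by
    intro i
    by_cases hi : i = N
    · rw [hi]; exact heN
    · exact hzero i N hi
  have hrhs1 : ∀ i j : Fin n, d0 (e i) * e j = 0 := by
    intro i j
    rw [hd0 i]
    split
    · exact hNz j
    · exact zero_mul _
  have hrhs2 : ∀ i j : Fin n, e i * d0 (e j) = 0 := by
    intro i j
    rw [hd0 j]
    split
    · exact hzN i
    · exact mul_zero _
  have hlhs : ∀ i j : Fin n, d0 (e i * e j) = 0 := by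
    intro i j
    by_cases hij : i = j
    · subst hij
      rw [hsq' i, map_sum]
      apply Finset.sum_eq_zero
      intro k _
      rw [map_smul, hd0 k]
      split
      · next hk0 =>
          rw [hAne i k (by omega), zero_smul]
      · rw [smul_zero]
    · rw [hzero i j hij, map_zero]
  have hIsD : IsDeriv d0 := by
    have hbil : (LinearMap.mul K E).compr₂ d0 =
        (LinearMap.mul K E).comp (d0 : E →ₗ[K] E) + (LinearMap.mul K E).compl₂ d0 := by
      apply LinearMap.ext_basis e e
      intro i j
      simp only [LinearMap.compr₂_apply, LinearMap.mul_apply', LinearMap.add_apply,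
        LinearMap.comp_apply, LinearMap.compl₂_apply]
      rw [hlhs i j, hrhs1 i j, hrhs2 i j, add_zero]
    intro x y
    have h := LinearMap.congr_fun (LinearMap.congr_fun hbil x) y
    simpa only [LinearMap.compr₂_apply, LinearMap.mul_apply', LinearMap.add_apply,
      LinearMap.comp_apply, LinearMap.compl₂_apply] using h
  have hd0ne : d0 ≠ 0 := by
    intro h0
    have h1 : d0 (e ⟨0, by omega⟩) = e N := by rw [hd0]; simp
    rw [h0] at h1
    exact (e.ne_zero N) (by simpa using h1.symm)
  have hspan : DerSubmodule K E = Submodule.span K {d0} := by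
    apply le_antisymm
    · intro d hdmem
      have hdd : IsDeriv d := hdmem
      obtain ⟨⟨β, hβ⟩, hvan⟩ := main d hdd
      have hdeq : d = β • d0 := by
        apply e.ext
        intro i
        by_cases hi : (i : ℕ) = 0
        · have hieq : i = ⟨0, by omega⟩ := Fin.ext hi
          rw [hieq, hβ, LinearMap.smul_apply, hd0]
          simp
          rfl
        · rw [hvan i (by omega), LinearMap.smul_apply, hd0 i, if_neg hi, smul_zero]
      rw [hdeq]
      exact Submodule.smul_mem _ β (Submodule.mem_span_singleton_self d0)
    · rw [Submodule.span_le, Set.singleton_subset_iff]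
      exact hIsD
  rw [hspan]
  exact finrank_span_singleton hd0ne
end

section
/- For any n-dimensional nilpotent evolution algebra E with dim E² = n−1 (equivalently, of maximal nilindex 2^{n−1}+1), the space of derivations satisfies 1 ≤ dim Der(E) ≤ 2. -/
set_option linter.unusedSectionVars false
set_option linter.unusedVariables false
set_option maxHeartbeats 1000000


/-- The span of all products `uv`, `u ∈ U`, `v ∈ V`, for submodules of an algebra. -/
def subMul {K E : Type*} [Field K] [NonUnitalNonAssocRing E] [Module K E]
    (U V : Submodule K E) : Submodule K E :=
  Submodule.span K {z : E | ∃ u ∈ U, ∃ v ∈ V, u * v = z}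

/-- The powers `E^1 = E`, `E^k = Σ_{i=1}^{k-1} E^i E^{k-i}`. -/
def Epow (K E : Type*) [Field K] [NonUnitalNonAssocRing E] [Module K E] : ℕ → Submodule K E
  | 0 => ⊥
  | 1 => ⊤
  | k + 2 => ⨆ i ∈ Finset.Icc 1 (k + 1), subMul (Epow K E i) (Epow K E (k + 2 - i))
decreasing_by
  all_goals simp only [Finset.mem_Icc] at *; omega

theorem Epow_one (K E : Type*) [Field K] [NonUnitalNonAssocRing E] [Module K E] :
    Epow K E 1 = ⊤ := by rw [Epow]

theorem mul_mem_Epow_succ {K E : Type*} [Field K] [NonUnitalNonAssocRing E] [Module K E]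
    {m : ℕ} (hm : 1 ≤ m) {x : E} (y : E)
    (hx : x ∈ Epow K E m) : x * y ∈ Epow K E (m + 1) := by
  obtain ⟨k, rfl⟩ : ∃ k, m = k + 1 := ⟨m - 1, by omega⟩
  rw [show k + 1 + 1 = k + 2 from rfl, Epow]
  have h1 : x * y ∈ subMul (Epow K E (k+1)) (Epow K E (k + 2 - (k+1))) := by
    apply Submodule.subset_span
    exact ⟨x, hx, y, by simp [Epow_one, show k + 2 - (k+1) = 1 by omega], rfl⟩
  refine Submodule.mem_iSup_of_mem (k+1) ?_
  refine Submodule.mem_iSup_of_mem ?_ h1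
  simp

section aux
variable {K E : Type*} [Field K] [NonUnitalNonAssocRing E]
    [Module K E] [SMulCommClass K E E] [IsScalarTower K E E]
    {n : ℕ} (e : Module.Basis (Fin n) K E)

theorem mul_eq_sum (hzero : ∀ i j : Fin n, i ≠ j → e i * e j = 0) (x y : E) :
    x * y = ∑ i : Fin n, (e.repr x i * e.repr y i) • (e i * e i) := by
  conv_lhs => rw [← e.sum_repr x, ← e.sum_repr y]
  rw [Finset.sum_mul]
  refine Finset.sum_congr rfl fun i _ => ?_
  rw [Finset.mul_sum, Finset.sum_eq_single i]
  · rw [smul_mul_assoc, mul_smul_comm, smul_smul]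
  · intro j _ hj
    rw [smul_mul_assoc, mul_smul_comm, hzero i j (Ne.symm hj), smul_zero, smul_zero]
  · intro h; exact absurd (Finset.mem_univ i) h

theorem mul_basis_right (hzero : ∀ i j : Fin n, i ≠ j → e i * e j = 0) (x : E) (j : Fin n) :
    x * e j = e.repr x j • (e j * e j) := by
  rw [mul_eq_sum e hzero, Finset.sum_eq_single j]
  · simp
  · intro i _ hi; simp [Module.Basis.repr_self, Finsupp.single_apply, Ne.symm hi]
  · intro h; exact absurd (Finset.mem_univ j) h

theorem mem_span_of_coords {s : Set (Fin n)} {x : E}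
    (h : ∀ j ∉ s, e.repr x j = 0) : x ∈ Submodule.span K (e '' s) := by
  rw [Module.Basis.mem_span_image]
  intro j hj
  by_contra hjs
  exact (Finsupp.mem_support_iff.mp hj) (h j hjs)

theorem coords_of_mem_span {s : Set (Fin n)} {x : E}
    (h : x ∈ Submodule.span K (e '' s)) : ∀ j ∉ s, e.repr x j = 0 := by
  rw [Module.Basis.mem_span_image] at h
  intro j hjs
  by_contra hj
  exact hjs (h (Finsupp.mem_support_iff.mpr hj))

theorem exists_triangular_basis (hzero : ∀ i j : Fin n, i ≠ j → e i * e j = 0)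
    (hnil : ∃ m : ℕ, 1 ≤ m ∧ Epow K E m = ⊥) :
    ∃ f : Module.Basis (Fin n) K E, (∀ i j : Fin n, i ≠ j → f i * f j = 0) ∧
      (∀ i j : Fin n, j ≤ i → f.repr (f i * f i) j = 0) := by
  classical
  -- the level filtration
  set T : ℕ → Set (Fin n) := fun t => Nat.rec ∅
    (fun _ prev => {i | e i * e i ∈ Submodule.span K (e '' prev)}) t with hT
  have hTsucc : ∀ t, T (t+1) = {i | e i * e i ∈ Submodule.span K (e '' T t)} := fun t => rfl
  have hmono : ∀ t, T t ⊆ T (t+1) := by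
    intro t
    induction t with
    | zero => simp [hT]
    | succ t ih =>
      intro i hi
      exact Submodule.span_mono (Set.image_mono ih) hi
  -- stabilization
  have hstab : ∃ t, T (t+1) = T t := by
    by_contra h
    push_neg at h
    have hcard : ∀ t, t ≤ (T t).ncard := by
      intro t
      induction t with
      | zero => omega
      | succ t ih =>
        have hss : T t ⊂ T (t+1) := ssubset_of_subset_of_ne (hmono t) (Ne.symm (h t))
        have := Set.ncard_lt_ncard hss (Set.toFinite _)
        omega
    have h1 : (T (n+1)).ncard ≤ n := by
      have := Set.ncard_le_ncard (Set.subset_univ (T (n+1))) (Set.toFinite _)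
      simpa [Set.ncard_univ] using this
    have := hcard (n+1)
    omega
  obtain ⟨t₀, ht₀⟩ := hstab
  -- the stable set is everything
  have hSfull : ∀ i, i ∈ T t₀ := by
    by_contra h
    push_neg at h
    obtain ⟨i₀, hi₀⟩ := h
    have hinv : ∀ m, ∃ x, x ∈ Epow K E (m+1) ∧ x ∉ Submodule.span K (e '' T t₀) := by
      intro m
      induction m with
      | zero =>
        refine ⟨e i₀, by rw [Epow_one]; trivial, fun hW => ?_⟩
        have := coords_of_mem_span e hW i₀ hi₀
        simp [Module.Basis.repr_self] at this
      | succ m ih =>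
        obtain ⟨x, hx, hxW⟩ := ih
        have hj : ∃ j, j ∉ T t₀ ∧ e.repr x j ≠ 0 := by
          by_contra hc
          push_neg at hc
          exact hxW (mem_span_of_coords e (fun j hjs => hc j hjs))
        obtain ⟨j, hjS, hjne⟩ := hj
        refine ⟨x * e j, mul_mem_Epow_succ (by omega) _ hx, fun hW => ?_⟩
        rw [mul_basis_right e hzero] at hW
        have hsq : e j * e j ∈ Submodule.span K (e '' T t₀) :=
          (Submodule.smul_mem_iff _ hjne).mp hW
        have : j ∈ T (t₀ + 1) := by rw [hTsucc]; exact hsq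
        rw [ht₀] at this
        exact hjS this
    obtain ⟨m, hm1, hmbot⟩ := hnil
    obtain ⟨x, hx, hxW⟩ := hinv (m - 1)
    rw [show m - 1 + 1 = m by omega, hmbot] at hx
    rw [Submodule.mem_bot] at hx
    exact hxW (hx ▸ Submodule.zero_mem _)
  -- levels
  have hex : ∀ i : Fin n, ∃ t, i ∈ T t := fun i => ⟨t₀, hSfull i⟩
  set lev : Fin n → ℕ := fun i => Nat.find (hex i) with hlev
  have hlev_spec : ∀ i, i ∈ T (lev i) := fun i => Nat.find_spec (hex i)
  have hlev_min : ∀ i t, i ∈ T t → lev i ≤ t := fun i t ht => Nat.find_min' (hex i) ht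
  have hlev_pos : ∀ i, 1 ≤ lev i := by
    intro i
    by_contra h
    have h0 : lev i = 0 := by omega
    have := hlev_spec i
    rw [h0] at this
    simp [hT] at this
  have hsq : ∀ i, e i * e i ∈ Submodule.span K (e '' {j | lev j < lev i}) := by
    intro i
    have h1 : i ∈ T ((lev i - 1) + 1) := by
      rw [show lev i - 1 + 1 = lev i by have := hlev_pos i; omega]
      exact hlev_spec i
    rw [hTsucc] at h1
    refine Submodule.span_mono (Set.image_mono ?_) h1
    intro j hj
    have := hlev_min j _ hj
    have := hlev_pos i
    simp only [Set.mem_setOf_eq]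
    omega
  -- sorting
  set σ : Equiv.Perm (Fin n) := Tuple.sort (fun i => OrderDual.toDual (lev i)) with hσ
  have hanti : ∀ a b : Fin n, a ≤ b → lev (σ b) ≤ lev (σ a) := by
    intro a b hab
    have := Tuple.monotone_sort (fun i => OrderDual.toDual (lev i)) hab
    simpa using this
  refine ⟨e.reindex σ.symm, ?_, ?_⟩
  · intro i j hij
    simp only [Module.Basis.reindex_apply]
    exact hzero _ _ (fun h => hij ((Equiv.symm σ).symm.injective h))
  · intro i j hji
    simp only [Module.Basis.reindex_apply, Module.Basis.repr_reindex_apply, Equiv.symm_symm]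
    refine coords_of_mem_span e (hsq (σ i)) (σ j) ?_
    simp only [Set.mem_setOf_eq, not_lt]
    exact hanti j i hji

end aux

section aux2
variable {K E : Type*} [Field K] [NonUnitalNonAssocRing E]
    [Module K E] [SMulCommClass K E E] [IsScalarTower K E E]
    {n : ℕ} (e : Module.Basis (Fin n) K E)

theorem Epow_two' (K E : Type*) [Field K] [NonUnitalNonAssocRing E] [Module K E] :
    Epow K E 2 = subMul (⊤ : Submodule K E) ⊤ := by
  rw [show (2:ℕ) = 0 + 2 from rfl, Epow]
  simp [Epow_one]

theorem Epow_two_eq_span (hzero : ∀ i j : Fin n, i ≠ j → e i * e j = 0) :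
    Epow K E 2 = Submodule.span K (Set.range fun i => e i * e i) := by
  rw [Epow_two', subMul]
  apply le_antisymm
  · rw [Submodule.span_le]
    rintro z ⟨u, -, v, -, rfl⟩
    rw [mul_eq_sum e hzero]
    exact Submodule.sum_mem _ fun i _ => Submodule.smul_mem _ _
      (Submodule.subset_span ⟨i, rfl⟩)
  · rw [Submodule.span_le]
    rintro z ⟨i, rfl⟩
    exact Submodule.subset_span ⟨e i, trivial, e i, trivial, rfl⟩

theorem superdiag_ne_zero (hzero : ∀ i j : Fin n, i ≠ j → e i * e j = 0)
    (htri : ∀ i j : Fin n, j ≤ i → e.repr (e i * e i) j = 0)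
    (hdim : Module.finrank K ↥(Epow K E 2) = n - 1) :
    ∀ i j : Fin n, (j:ℕ) = (i:ℕ) + 1 → e.repr (e i * e i) j ≠ 0 := by
  classical
  intro i j hij h0
  haveI : Module.Finite K E := Module.Finite.of_basis e
  set A := Submodule.span K (Set.range (fun s : {s : Fin n // (s:ℕ) < (i:ℕ)} => e s.1 * e s.1))
    with hA_def
  set B := Submodule.span K (e '' {t : Fin n | (i:ℕ)+2 ≤ (t:ℕ)}) with hB_def
  have hle : Epow K E 2 ≤ A ⊔ B := by
    rw [Epow_two_eq_span e hzero, Submodule.span_le]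
    rintro z ⟨s, rfl⟩
    by_cases hs : (s:ℕ) < (i:ℕ)
    · exact Submodule.mem_sup_left (Submodule.subset_span ⟨⟨s, hs⟩, rfl⟩)
    · refine Submodule.mem_sup_right (mem_span_of_coords e ?_)
      intro t ht
      simp only [Set.mem_setOf_eq, not_le] at ht
      by_cases hts : (t:ℕ) ≤ (s:ℕ)
      · exact htri s t (Fin.le_def.mpr hts)
      · have hsieq : s = i := Fin.ext (by omega)
        have htj : t = j := Fin.ext (by omega)
        rw [hsieq, htj]; exact h0
  have hA : Module.finrank K ↥A ≤ (i:ℕ) := by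
    refine le_trans (finrank_range_le_card _) ?_
    have h := Fintype.card_le_of_injective
      (fun s : {s : Fin n // (s:ℕ) < (i:ℕ)} => (⟨s.1.1, s.2⟩ : Fin (i:ℕ)))
      (fun a b hab => Subtype.ext (Fin.ext (by simpa [Fin.mk.injEq] using hab)))
    simpa using h
  have hB : Module.finrank K ↥B ≤ n - ((i:ℕ)+2) := by
    rw [hB_def, Set.image_eq_range]
    refine le_trans (finrank_range_le_card _) ?_
    have h := Fintype.card_le_of_injective
      (fun t : {t : Fin n // (i:ℕ)+2 ≤ (t:ℕ)} => (⟨t.1.1 - ((i:ℕ)+2), by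
        have h1 := t.1.2
        have h2 : (i:ℕ)+2 ≤ (t.1:ℕ) := t.2
        omega⟩ : Fin (n - ((i:ℕ)+2))))
      (fun a b hab => by
        have h2a : (i:ℕ)+2 ≤ (a.1:ℕ) := a.2
        have h2b : (i:ℕ)+2 ≤ (b.1:ℕ) := b.2
        have hv : (a.1:ℕ) - ((i:ℕ)+2) = (b.1:ℕ) - ((i:ℕ)+2) := by
          simpa [Fin.mk.injEq] using hab
        exact Subtype.ext (Fin.ext (by omega)))
    simpa [Fintype.card_subtype] using h
  have hsum := Submodule.finrank_add_le_finrank_add_finrank A B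
  have hmono := Submodule.finrank_mono (t := A ⊔ B) hle
  have hjn : (i:ℕ)+1 < n := hij ▸ j.2
  rw [hdim] at hmono
  omega

end aux2


section aux3
variable {K E : Type*} [Field K] [NonUnitalNonAssocRing E]
    [Module K E] [SMulCommClass K E E] [IsScalarTower K E E]
    {n : ℕ} (e : Module.Basis (Fin n) K E)

theorem basis_mul_left (hzero : ∀ i j : Fin n, i ≠ j → e i * e j = 0) (x : E) (j : Fin n) :
    e j * x = e.repr x j • (e j * e j) := by
  rw [mul_eq_sum e hzero, Finset.sum_eq_single j]
  · simp
  · intro i _ hi; simp [Module.Basis.repr_self, Finsupp.single_apply, Ne.symm hi]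
  · intro h; exact absurd (Finset.mem_univ j) h

theorem mem_der_iff {d : Module.End K E} :
    d ∈ DerSubmodule K E ↔ ∀ x y : E, d (x * y) = d x * y + x * d y := Iff.rfl

theorem der_constraint (hzero : ∀ i j : Fin n, i ≠ j → e i * e j = 0)
    {d : Module.End K E} (hd : d ∈ DerSubmodule K E) {i j : Fin n} (hij : i ≠ j) :
    e.repr (d (e i)) j • (e j * e j) + e.repr (d (e j)) i • (e i * e i) = 0 := by
  have h := mem_der_iff.mp hd (e i) (e j)
  rw [hzero i j hij, map_zero] at h
  rw [mul_basis_right e hzero (d (e i)) j, basis_mul_left e hzero (d (e j)) i] at h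
  exact h.symm

theorem sq_ne_zero (hzero : ∀ i j : Fin n, i ≠ j → e i * e j = 0)
    (hsup : ∀ i j : Fin n, (j:ℕ) = (i:ℕ) + 1 → e.repr (e i * e i) j ≠ 0)
    {i : Fin n} (hi : (i:ℕ) + 1 < n) : e i * e i ≠ 0 := by
  intro h
  exact hsup i ⟨(i:ℕ)+1, hi⟩ rfl (by rw [h]; simp)

theorem der_eq_zero_of (hn : 1 ≤ n)
    (hzero : ∀ i j : Fin n, i ≠ j → e i * e j = 0)
    (htri : ∀ i j : Fin n, j ≤ i → e.repr (e i * e i) j = 0)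
    (hsup : ∀ i j : Fin n, (j:ℕ) = (i:ℕ) + 1 → e.repr (e i * e i) j ≠ 0)
    {d : Module.End K E} (hd : d ∈ DerSubmodule K E)
    (h0 : e.repr (d (e ⟨0, hn⟩)) ⟨0, hn⟩ = 0)
    (hl : e.repr (d (e ⟨0, hn⟩)) ⟨n-1, by omega⟩ = 0) : d = 0 := by
  classical
  set z0 : Fin n := ⟨0, hn⟩ with hz0
  -- step 1 : d (e z0) = 0
  have step1 : d (e z0) = 0 := by
    rw [e.ext_elem_iff]
    intro j
    rw [map_zero, Finsupp.coe_zero, Pi.zero_apply]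
    rcases Nat.lt_or_ge 0 (j:ℕ) with hj0 | hj0
    · rcases Nat.lt_or_ge (j:ℕ) (n-1) with hjl | hjl
      · -- middle coordinate
        have hn3 : 2 < n := by omega
        have hij : z0 ≠ j := by
          intro h; rw [← h] at hj0; simp [hz0] at hj0
        have heq := der_constraint e hzero hd hij
        set u1 : Fin n := ⟨1, by omega⟩ with hu1
        have hco := congrArg (fun w => e.repr w u1) heq
        simp only [map_add, map_smul, Finsupp.add_apply, Finsupp.smul_apply,
          smul_eq_mul, map_zero, Finsupp.coe_zero, Pi.zero_apply] at hco
        have htj : e.repr (e j * e j) u1 = 0 := htri j u1 (by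
          rw [Fin.le_def]; simp only [hu1, hz0, Fin.val_mk]; omega)
        have hAne : e.repr (e z0 * e z0) u1 ≠ 0 := hsup z0 u1 (by
          simp only [hu1, hz0, Fin.val_mk])
        rw [htj, mul_zero, zero_add] at hco
        have hc2 : e.repr (d (e j)) z0 = 0 := by
          rcases mul_eq_zero.mp hco with h | h
          · exact h
          · exact absurd h hAne
        rw [hc2, zero_smul, add_zero] at heq
        have hsq : e j * e j ≠ 0 := sq_ne_zero e hzero hsup (by omega)
        rcases smul_eq_zero.mp heq with h | h
        · exact h
        · exact absurd h hsq
      · have : j = (⟨n-1, by omega⟩ : Fin n) := Fin.ext (by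
          simp only [Fin.val_mk]; have := j.2; omega)
        rw [this]; exact hl
    · have : j = z0 := Fin.ext (by simp only [hz0, Fin.val_mk]; omega)
      rw [this]; exact h0
  -- the generating sequence
  set x : ℕ → E := fun l => Nat.rec (e z0) (fun _ prev => prev * prev) l with hx
  have hxs : ∀ l, x (l+1) = x l * x l := fun l => rfl
  have hcoord : ∀ l, ∀ hln : l < n,
      (∀ j : Fin n, (j:ℕ) < l → e.repr (x l) j = 0) ∧
        e.repr (x l) ⟨l, hln⟩ ≠ 0 := by
    intro l
    induction l with
    | zero =>
      intro _
      refine ⟨fun j hj => absurd hj (by omega), ?_⟩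
      show e.repr (e z0) ⟨0, hn⟩ ≠ 0
      simp [Module.Basis.repr_self, hz0]
    | succ l ih =>
      intro hln
      obtain ⟨ihc, ihd⟩ := ih (by omega)
      have hexp : ∀ j : Fin n, e.repr (x (l+1)) j =
          ∑ s : Fin n, (e.repr (x l) s * e.repr (x l) s) * e.repr (e s * e s) j := by
        intro j
        rw [hxs, mul_eq_sum e hzero]
        simp [Finsupp.finset_sum_apply, map_sum, map_smul, Finsupp.smul_apply, smul_eq_mul]
      constructor
      · intro j hj
        rw [hexp]
        refine Finset.sum_eq_zero fun s _ => ?_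
        rcases Nat.lt_or_ge (s:ℕ) l with hs | hs
        · rw [ihc s hs]; ring
        · rw [htri s j (by rw [Fin.le_def]; omega)]; ring
      · rw [hexp]
        rw [Finset.sum_eq_single (⟨l, by omega⟩ : Fin n)]
        · refine mul_ne_zero (mul_ne_zero ihd ihd) ?_
          exact hsup ⟨l, by omega⟩ ⟨l+1, by omega⟩ rfl
        · intro s _ hs
          rcases Nat.lt_or_ge (s:ℕ) l with h | h
          · rw [ihc s h]; ring
          · have hsl : l < (s:ℕ) := by
              rcases Nat.eq_or_lt_of_le h with h' | h'
              · exact absurd (Fin.ext h'.symm) hs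
              · exact h'
            rw [htri s ⟨l+1, by omega⟩ (by rw [Fin.le_def]; simp only [Fin.val_mk]; omega)]; ring
        · intro h; exact absurd (Finset.mem_univ _) h
  have hker : ∀ l, d (x l) = 0 := by
    intro l
    induction l with
    | zero => exact step1
    | succ l ih =>
      rw [hxs]
      rw [mem_der_iff.mp hd (x l) (x l), ih]
      simp
  -- independence of the x's
  set y : Fin n → E := fun l => x (l:ℕ) with hy
  have hli : LinearIndependent K y := by
    rw [Fintype.linearIndependent_iff]
    intro g hg
    by_contra hc
    push_neg at hc
    obtain ⟨i0, hi0⟩ := hc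
    set F := Finset.univ.filter (fun i : Fin n => g i ≠ 0) with hF
    have hFne : F.Nonempty := ⟨i0, by simp [hF, hi0]⟩
    set l := F.min' hFne with hlm
    have hgl : g l ≠ 0 := by
      have := F.min'_mem hFne
      simp [hF] at this
      exact this
    have hmin : ∀ s : Fin n, (s:ℕ) < (l:ℕ) → g s = 0 := by
      intro s hs
      by_contra hgs
      have : l ≤ s := F.min'_le s (by simp [hF, hgs])
      rw [Fin.le_def] at this
      omega
    have hco := congrArg (fun w => e.repr w l) hg
    simp only [map_sum, map_smul, Finsupp.finset_sum_apply, Finsupp.smul_apply,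
      smul_eq_mul, map_zero, Finsupp.coe_zero, Pi.zero_apply] at hco
    rw [Finset.sum_eq_single l] at hco
    · have hdiag : e.repr (x (l:ℕ)) ⟨(l:ℕ), l.2⟩ ≠ 0 := (hcoord (l:ℕ) l.2).2
      rw [Fin.eta] at hdiag
      exact (mul_ne_zero hgl hdiag) hco
    · intro s _ hs
      rcases Nat.lt_or_ge (s:ℕ) (l:ℕ) with h | h
      · rw [hmin s h]; ring
      · have hls : (l:ℕ) < (s:ℕ) := by
          rcases Nat.eq_or_lt_of_le h with h' | h'
          · exact absurd (Fin.ext h'.symm) hs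
          · exact h'
        have := (hcoord (s:ℕ) s.2).1 l hls
        rw [hy]
        rw [this]; ring
    · intro h; exact absurd (Finset.mem_univ _) h
  -- span is everything
  haveI : Module.Finite K E := Module.Finite.of_basis e
  have hspan : Submodule.span K (Set.range y) = ⊤ := by
    apply Submodule.eq_top_of_finrank_eq
    rw [finrank_span_eq_card hli, Fintype.card_fin, Module.finrank_eq_card_basis e,
      Fintype.card_fin]
  have hkertop : (⊤ : Submodule K E) ≤ LinearMap.ker d := by
    rw [← hspan, Submodule.span_le]
    rintro w ⟨l, rfl⟩
    exact hker (l:ℕ)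
  exact LinearMap.ker_eq_top.mp (eq_top_iff.mpr hkertop)

end aux3

section final
variable {K E : Type*} [Field K] [NonUnitalNonAssocRing E]
    [Module K E] [SMulCommClass K E E] [IsScalarTower K E E]
    {n : ℕ} (e : Module.Basis (Fin n) K E)

theorem exists_nonzero_der (hn : 1 ≤ n)
    (hzero : ∀ i j : Fin n, i ≠ j → e i * e j = 0)
    (htri : ∀ i j : Fin n, j ≤ i → e.repr (e i * e i) j = 0) :
    ∃ d : Module.End K E, d ∈ DerSubmodule K E ∧ d ≠ 0 := by
  set z0 : Fin n := ⟨0, hn⟩ with hz0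
  set zl : Fin n := ⟨n-1, by omega⟩ with hzl
  have hsql : e zl * e zl = 0 := by
    rw [e.ext_elem_iff]
    intro j
    rw [htri zl j (by rw [Fin.le_def]; simp only [hzl, Fin.val_mk]; have := j.2; omega)]
    simp
  refine ⟨(e.coord z0).smulRight (e zl), ?_, ?_⟩
  · intro u v
    have h1 : e.coord z0 (u * v) = 0 := by
      rw [Module.Basis.coord_apply, mul_eq_sum e hzero]
      simp only [map_sum, map_smul, Finsupp.finset_sum_apply, Finsupp.smul_apply,
        smul_eq_mul]
      refine Finset.sum_eq_zero fun s _ => ?_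
      rw [htri s z0 (by rw [Fin.le_def]; simp only [hz0, Fin.val_mk]; omega)]
      ring
    rw [LinearMap.smulRight_apply, LinearMap.smulRight_apply, LinearMap.smulRight_apply, h1,
      zero_smul]
    rw [smul_mul_assoc, mul_smul_comm]
    rw [basis_mul_left e hzero v zl, mul_basis_right e hzero u zl, hsql]
    simp
  · intro h
    have := congrArg (fun w : Module.End K E => w (e z0)) h
    simp only [LinearMap.smulRight_apply, Module.Basis.coord_apply, Module.Basis.repr_self,
      Finsupp.single_eq_same, one_smul, LinearMap.zero_apply] at this
    exact e.ne_zero zl this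

end final


/-- for any `n`-dimensional nilpotent evolution algebra `E` with
`dim E² = n − 1` (equivalently, of maximal nilindex `2^{n−1}+1`), one has
`1 ≤ dim Der(E) ≤ 2`. -/
theorem stmt6 {K E : Type*} [Field K] [CharZero K] [NonUnitalNonAssocRing E]
    [Module K E] [SMulCommClass K E E] [IsScalarTower K E E]
    (n : ℕ) (hn : 1 ≤ n) (e : Module.Basis (Fin n) K E)
    (hzero : ∀ i j : Fin n, i ≠ j → e i * e j = 0)
    (hnil : ∃ m : ℕ, 1 ≤ m ∧ Epow K E m = ⊥)
    (hdim : Module.finrank K ↥(Epow K E 2) = n - 1) :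
    1 ≤ Module.finrank K ↥(DerSubmodule K E) ∧
      Module.finrank K ↥(DerSubmodule K E) ≤ 2 := by
  classical
  obtain ⟨f, hfz, htri⟩ := exists_triangular_basis e hzero hnil
  have hsup := superdiag_ne_zero f hfz htri hdim
  haveI : Module.Finite K E := Module.Finite.of_basis f
  haveI : Module.Finite K (Module.End K E) := by infer_instance
  constructor
  · -- lower bound
    obtain ⟨d0, hd0mem, hd0ne⟩ := exists_nonzero_der f hn hfz htri
    have hnt : Nontrivial ↥(DerSubmodule K E) := by
      refine nontrivial_of_ne ⟨d0, hd0mem⟩ 0 ?_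
      simp only [ne_eq, Submodule.mk_eq_zero]
      exact hd0ne
    have := Module.finrank_pos_iff (R := K) |>.mpr hnt
    omega
  · -- upper bound
    set z0 : Fin n := ⟨0, hn⟩ with hz0
    set zl : Fin n := ⟨n-1, by omega⟩ with hzl
    set Φ : ↥(DerSubmodule K E) →ₗ[K] K × K :=
      LinearMap.prod
        ((f.coord z0) ∘ₗ (LinearMap.applyₗ (f z0)) ∘ₗ (DerSubmodule K E).subtype)
        ((f.coord zl) ∘ₗ (LinearMap.applyₗ (f z0)) ∘ₗ (DerSubmodule K E).subtype)
      with hΦ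
    have hinj : Function.Injective Φ := by
      rw [← LinearMap.ker_eq_bot]
      rw [Submodule.eq_bot_iff]
      intro d hdker
      rw [LinearMap.mem_ker, hΦ] at hdker
      have h1 := congrArg Prod.fst hdker
      have h2 := congrArg Prod.snd hdker
      simp only [LinearMap.prod_apply, Pi.prod, LinearMap.comp_apply,
        Submodule.subtype_apply, LinearMap.applyₗ, LinearMap.applyₗ', Module.Basis.coord_apply,
        Prod.fst_zero, Prod.snd_zero] at h1 h2
      have := der_eq_zero_of f hn hfz htri hsup d.2 h1 h2
      exact Subtype.ext this
    have hle := LinearMap.finrank_le_finrank_of_injective hinj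
    rw [Module.finrank_prod, Module.finrank_self] at hle
    omega
end

section
/- Let E be an n-dimensional nilpotent evolution algebra with maximal nilindex 2^{n−1}+1, where n > 2. Then every local derivation of E is a derivation. -/
/-- A local derivation: a linear map agreeing at each point with some derivation. -/
def IsLocalDeriv {K E : Type*} [Field K] [NonUnitalNonAssocRing E] [Module K E]
    (Δ : E →ₗ[K] E) : Prop :=
  ∀ u : E, ∃ d : Module.End K E, IsDeriv d ∧ Δ u = d u

set_option linter.unusedSectionVars false

section Aux
variable {K E : Type*} [Field K] [NonUnitalNonAssocRing E]
    [Module K E] [SMulCommClass K E E] [IsScalarTower K E E]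
    {n : ℕ} {a : Fin n → Fin n → K} {e : Module.Basis (Fin n) K E}
    (hzero : ∀ i j : Fin n, i ≠ j → e i * e j = 0)
    (hsq : ∀ i : Fin n, e i * e i = ∑ j ∈ Finset.univ.filter (fun j => i < j), a i j • e j)
    (hne : ∀ i : Fin n, ∀ hi : (i : ℕ) + 1 < n, a i ⟨(i : ℕ) + 1, hi⟩ ≠ 0)

include hzero hsq hne

omit hsq hne in
lemma mul_basis (x : E) (j : Fin n) :
    x * e j = e.repr x j • (e j * e j) := by
  conv_lhs => rw [← e.sum_repr x, Finset.sum_mul]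
  rw [Finset.sum_eq_single j]
  · rw [smul_mul_assoc]
  · intro i _ hij; rw [smul_mul_assoc, hzero i j hij, smul_zero]
  · intro h; exact absurd (Finset.mem_univ j) h

omit hsq hne in
lemma basis_mul (y : E) (i : Fin n) :
    e i * y = e.repr y i • (e i * e i) := by
  conv_lhs => rw [← e.sum_repr y, Finset.mul_sum]
  rw [Finset.sum_eq_single i]
  · rw [mul_smul_comm]
  · intro j _ hij; rw [mul_smul_comm, hzero i j (Ne.symm hij), smul_zero]
  · intro h; exact absurd (Finset.mem_univ i) h

omit hzero hne in
lemma repr_sq (i m : Fin n) : e.repr (e i * e i) m = if i < m then a i m else 0 := by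
  rw [hsq i, map_sum, Finset.sum_apply']
  simp only [map_smul, Finsupp.smul_apply, Module.Basis.repr_self, Finsupp.single_apply, smul_eq_mul,
    mul_ite, mul_one, mul_zero]
  rw [Finset.sum_ite_eq' (Finset.univ.filter (fun j => i < j)) m (fun j => a i j)]
  simp [Finset.mem_filter]

omit hne in
lemma key_rel {d : E →ₗ[K] E} (hd : IsDeriv d) {i j : Fin n} (hij : i ≠ j) (m : Fin n) :
    e.repr (d (e i)) j * (if j < m then a j m else 0)
      + e.repr (d (e j)) i * (if i < m then a i m else 0) = 0 := by
  have h1 : d (e i) * e j + e i * d (e j) = 0 := by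
    rw [← hd (e i) (e j), hzero i j hij, map_zero]
  rw [mul_basis hzero (d (e i)) j, basis_mul hzero (d (e j)) i] at h1
  have h2 := congrArg (fun z => e.repr z m) h1
  simpa [repr_sq hsq, mul_comm] using h2

lemma lower_zero {d : E →ₗ[K] E} (hd : IsDeriv d) {i j : Fin n} (hij : i < j) :
    e.repr (d (e j)) i = 0 := by
  have hi1 : (i : ℕ) + 1 < n := lt_of_le_of_lt (Nat.succ_le_of_lt hij) j.isLt
  have h := key_rel hzero hsq hd (ne_of_lt hij) ⟨(i : ℕ) + 1, hi1⟩
  have hjlt : ¬ (j < (⟨(i : ℕ) + 1, hi1⟩ : Fin n)) := by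
    simp only [Fin.lt_def, Fin.val_mk] at hij ⊢; omega
  have hilt : i < (⟨(i : ℕ) + 1, hi1⟩ : Fin n) := by simp [Fin.lt_def]
  rw [if_neg hjlt, if_pos hilt, mul_zero, zero_add] at h
  exact (mul_eq_zero.mp h).resolve_right (hne i hi1)

lemma offdiag {d : E →ₗ[K] E} (hd : IsDeriv d) {i j : Fin n} (hij : j ≠ i)
    (hjl : (j : ℕ) ≠ n - 1) : e.repr (d (e i)) j = 0 := by
  rcases lt_or_gt_of_ne hij with h | h
  · -- j < i
    exact lower_zero hzero hsq hne hd h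
  · -- i < j, j ≠ last
    have hj1 : (j : ℕ) + 1 < n := by have := j.isLt; omega
    have hk := key_rel hzero hsq hd (ne_of_lt h) ⟨(j : ℕ) + 1, hj1⟩
    have hjlt : j < (⟨(j : ℕ) + 1, hj1⟩ : Fin n) := by simp [Fin.lt_def]
    rw [if_pos hjlt, lower_zero hzero hsq hne hd h, zero_mul, add_zero] at hk
    exact (mul_eq_zero.mp hk).resolve_right (hne j hj1)


omit hne in
lemma sq_identity {d : E →ₗ[K] E} (hd : IsDeriv d) (i m : Fin n) :
    ∑ j ∈ Finset.univ.filter (fun j => i < j), a i j * e.repr (d (e j)) m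
      = 2 * e.repr (d (e i)) i * (if i < m then a i m else 0) := by
  have hA : e.repr (d (e i * e i)) m
      = 2 * e.repr (d (e i)) i * (if i < m then a i m else 0) := by
    rw [hd (e i) (e i), mul_basis hzero (d (e i)) i, basis_mul hzero (d (e i)) i,
      map_add, map_smul]
    simp only [Finsupp.add_apply, Finsupp.smul_apply, smul_eq_mul, repr_sq hsq]
    ring
  have hB : e.repr (d (e i * e i)) m
      = ∑ j ∈ Finset.univ.filter (fun j => i < j), a i j * e.repr (d (e j)) m := by
    conv_lhs => rw [hsq i]
    rw [map_sum, map_sum, Finset.sum_apply']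
    refine Finset.sum_congr rfl fun j _ => ?_
    rw [map_smul, map_smul]
    simp
  rw [← hB, hA]

lemma diag_step {d : E →ₗ[K] E} (hd : IsDeriv d) (i : Fin n) (hi : (i : ℕ) + 1 < n) :
    e.repr (d (e ⟨(i : ℕ) + 1, hi⟩)) ⟨(i : ℕ) + 1, hi⟩ = 2 * e.repr (d (e i)) i := by
  set i1 : Fin n := ⟨(i : ℕ) + 1, hi⟩ with hi1
  have h := sq_identity hzero hsq hd i i1
  have hii1 : i < i1 := by simp [hi1, Fin.lt_def]
  rw [if_pos hii1] at h
  rw [Finset.sum_eq_single i1] at h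
  · have h' : a i i1 * e.repr (d (e i1)) i1 = a i i1 * (2 * e.repr (d (e i)) i) := by
      rw [h]; ring
    exact mul_left_cancel₀ (hne i hi) h'
  · intro j hj hji1
    have hij : i < j := (Finset.mem_filter.mp hj).2
    by_cases hl : (i1 : ℕ) = n - 1
    · exfalso
      have := j.isLt
      apply hji1
      apply Fin.ext
      have : (j : ℕ) ≤ n - 1 := by omega
      have h2 : (i : ℕ) < j := hij
      simp [hi1] at hl ⊢
      omega
    · exact mul_eq_zero_of_right _ (offdiag hzero hsq hne hd (Ne.symm hji1) hl)
  · intro hni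
    exact absurd (Finset.mem_filter.mpr ⟨Finset.mem_univ _, hii1⟩) hni
lemma diag_zero {d : E →ₗ[K] E} (hn : 0 < n) (hd : IsDeriv d)
    (h0 : e.repr (d (e ⟨0, hn⟩)) ⟨0, hn⟩ = 0) (i : Fin n) : e.repr (d (e i)) i = 0 := by
  have aux : ∀ m (hm : m < n), e.repr (d (e ⟨m, hm⟩)) ⟨m, hm⟩ = 0 := by
    intro m
    induction m with
    | zero => intro hm; exact h0
    | succ k IH =>
      intro hm
      have hk : k < n := by omega
      have := diag_step hzero hsq hne hd ⟨k, hk⟩ hm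
      rw [this, IH hk, mul_zero]
  have := aux i.val i.isLt
  simpa using this

lemma col_zero {d : E →ₗ[K] E} (hn : 0 < n) (hd : IsDeriv d)
    (hdiag : ∀ i : Fin n, e.repr (d (e i)) i = 0) :
    ∀ i : Fin n, (i : ℕ) ≠ 0 → e.repr (d (e i)) ⟨n - 1, by omega⟩ = 0 := by
  have main : ∀ t : ℕ, ∀ i : Fin n, n - 1 - (i : ℕ) = t → (i : ℕ) ≠ 0 →
      e.repr (d (e i)) ⟨n - 1, by omega⟩ = 0 := by
    intro t
    induction t using Nat.strong_induction_on with
    | _ t IH =>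
      intro i hti hi0
      by_cases hlast : (i : ℕ) = n - 1
      · have hi : i = ⟨n - 1, by omega⟩ := Fin.ext hlast
        rw [hi]; exact hdiag _
      · have hilt : (i : ℕ) < n - 1 := by have := i.isLt; omega
        have hipv : (i : ℕ) - 1 < n := by omega
        set ip : Fin n := ⟨(i : ℕ) - 1, hipv⟩ with hip
        have h := sq_identity hzero hsq hd ip ⟨n - 1, by omega⟩
        rw [hdiag ip, mul_zero, zero_mul] at h
        rw [Finset.sum_eq_single i] at h
        · have hne' : a ip i ≠ 0 := by
            have h1 : (ip : ℕ) + 1 < n := by simp [hip]; omega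
            have h2 : (⟨(ip : ℕ) + 1, h1⟩ : Fin n) = i := by
              apply Fin.ext; simp [hip]; omega
            rw [← h2]; exact hne ip h1
          exact (mul_eq_zero.mp h).resolve_left hne'
        · intro j hj hji
          have hipj : ip < j := (Finset.mem_filter.mp hj).2
          have hjgt : (i : ℕ) < (j : ℕ) := by
            have h1 : (ip : ℕ) < (j : ℕ) := hipj
            have h2 : (j : ℕ) ≠ (i : ℕ) := fun hc => hji (Fin.ext hc)
            simp [hip] at h1; omega
          have := IH (n - 1 - (j : ℕ)) (by omega) j rfl (by omega)
          rw [this, mul_zero]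
        · intro hni
          exfalso; apply hni
          refine Finset.mem_filter.mpr ⟨Finset.mem_univ _, ?_⟩
          show ip < i
          simp [Fin.lt_def, hip]; omega
  intro i hi0
  exact main (n - 1 - (i : ℕ)) i rfl hi0

lemma pow_diag {d : E →ₗ[K] E} (hn : 0 < n) (hd : IsDeriv d) (m : ℕ) (hm : m < n) :
    e.repr (d (e ⟨m, hm⟩)) ⟨m, hm⟩ = 2 ^ m * e.repr (d (e ⟨0, hn⟩)) ⟨0, hn⟩ := by
  induction m with
  | zero => simp
  | succ k IH =>
    have hk : k < n := by omega
    rw [diag_step hzero hsq hne hd ⟨k, hk⟩ hm, IH hk]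
    ring

lemma vanish [CharZero K] {d : E →ₗ[K] E} (hn : 0 < n) (hd : IsDeriv d) {k : Fin n}
    (hk : e.repr (d (e k)) k = 0) : ∀ i : Fin n, (i : ℕ) ≠ 0 → d (e i) = 0 := by
  have h0 : e.repr (d (e ⟨0, hn⟩)) ⟨0, hn⟩ = 0 := by
    have h1 := pow_diag hzero hsq hne hn hd k.val k.isLt
    simp only [Fin.eta] at h1
    rw [hk] at h1
    have h2 : (2 : K) ^ (k : ℕ) ≠ 0 := pow_ne_zero _ two_ne_zero
    field_simp at h1
    exact (mul_eq_zero.mp h1.symm).resolve_left h2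
  have hdiag := diag_zero hzero hsq hne hn hd h0
  have hcol := col_zero hzero hsq hne hn hd hdiag
  intro i hi0
  have : e.repr (d (e i)) = 0 := by
    ext j
    by_cases hji : j = i
    · rw [hji]; simpa using hdiag i
    · by_cases hjl : (j : ℕ) = n - 1
      · have : j = ⟨n - 1, by omega⟩ := Fin.ext hjl
        rw [this]; simpa using hcol i hi0
      · simpa using offdiag hzero hsq hne hd hji hjl
  simpa using e.repr.map_eq_zero_iff.mp this

omit hzero hsq hne in
lemma IsDeriv.sub' {d d' : E →ₗ[K] E} (hd : IsDeriv d) (hd' : IsDeriv d') :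
    IsDeriv (d - d') := by
  intro x y
  simp only [LinearMap.sub_apply, hd x y, hd' x y, sub_mul, mul_sub]
  abel

end Aux

/-- for an `n`-dimensional nilpotent evolution algebra with maximal
nilindex `2^{n−1}+1` and `n > 2`, every local derivation is a derivation. -/
theorem stmt10 {K E : Type*} [Field K] [CharZero K] [NonUnitalNonAssocRing E]
    [Module K E] [SMulCommClass K E E] [IsScalarTower K E E]
    (n : ℕ) (hn : 2 < n) (a : Fin n → Fin n → K) (e : Module.Basis (Fin n) K E)
    (hzero : ∀ i j : Fin n, i ≠ j → e i * e j = 0)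
    (hsq : ∀ i : Fin n, e i * e i = ∑ j ∈ Finset.univ.filter (fun j => i < j), a i j • e j)
    (hne : ∀ i : Fin n, ∀ hi : (i : ℕ) + 1 < n, a i ⟨(i : ℕ) + 1, hi⟩ ≠ 0)
    (Δ : E →ₗ[K] E) (hΔ : IsLocalDeriv Δ) :
    IsDeriv Δ := by
  have hn0 : 0 < n := by omega
  classical
  obtain ⟨D, hD, hDeq⟩ := hΔ (∑ i, e i)
  choose g hg hΔg using hΔ
  -- off-diagonal vanishing for Δ
  have hΔoff : ∀ i j : Fin n, j ≠ i → (j : ℕ) ≠ n - 1 → e.repr (Δ (e i)) j = 0 := by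
    intro i j hji hjl
    rw [hΔg (e i)]
    exact offdiag hzero hsq hne (hg (e i)) hji hjl
  -- Step B : diagonal entries of Δ agree with those of D (except possibly at last)
  have stepB : ∀ j : Fin n, (j : ℕ) ≠ n - 1 → e.repr (Δ (e j)) j = e.repr (D (e j)) j := by
    intro j hj
    have h1 : ∑ i, e.repr (Δ (e i)) j = ∑ i, e.repr (D (e i)) j := by
      have h2 := congrArg (fun z => e.repr z j) hDeq
      simpa [map_sum, Finset.sum_apply'] using h2
    rw [Finset.sum_eq_single j (fun i _ hij => hΔoff i j (Ne.symm hij) hj)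
        (fun hni => absurd (Finset.mem_univ j) hni),
      Finset.sum_eq_single j (fun i _ hij => offdiag hzero hsq hne hD (Ne.symm hij) hj)
        (fun hni => absurd (Finset.mem_univ j) hni)] at h1
    exact h1
  -- rigidity : any derivation matching D at one non-last diagonal entry agrees with D
  -- away from e_0
  have rigid : ∀ (d : E →ₗ[K] E), IsDeriv d → ∀ k : Fin n,
      e.repr (d (e k)) k = e.repr (D (e k)) k →
      ∀ m : Fin n, (m : ℕ) ≠ 0 → d (e m) = D (e m) := by
    intro d hd k hk m hm
    have hsub : IsDeriv (d - D) := IsDeriv.sub' hd hD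
    have hkk : e.repr ((d - D) (e k)) k = 0 := by
      simp only [LinearMap.sub_apply, map_sub, Finsupp.sub_apply]
      rw [hk, sub_self]
    have := vanish hzero hsq hne hn0 hsub hkk m hm
    have h2 : d (e m) - D (e m) = 0 := by simpa using this
    exact sub_eq_zero.mp h2
  -- Δ agrees with D on middle basis vectors
  have hmid : ∀ m : Fin n, (m : ℕ) ≠ 0 → (m : ℕ) ≠ n - 1 → Δ (e m) = D (e m) := by
    intro m hm0 hml
    rw [hΔg (e m)]
    exact rigid (g (e m)) (hg (e m)) m (by rw [← hΔg (e m)]; exact stepB m hml) m hm0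
  -- Δ agrees with D at the last basis vector
  have i1 : Fin n := ⟨1, by omega⟩
  have hlastv : Δ (e ⟨n - 1, by omega⟩) = D (e ⟨n - 1, by omega⟩) := by
    set i1 : Fin n := ⟨1, by omega⟩ with hi1
    set lst : Fin n := ⟨n - 1, by omega⟩ with hlst
    have h1ne : (i1 : ℕ) ≠ n - 1 := by simp [hi1]; omega
    have h1n0 : (i1 : ℕ) ≠ 0 := by simp [hi1]
    set d' := g (e i1 + e lst) with hd'def
    have hd' : IsDeriv d' := hg _
    have heq' : Δ (e i1 + e lst) = d' (e i1 + e lst) := hΔg _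
    have hi1lst : i1 ≠ lst := fun hc => h1ne (by rw [hc])
    -- compare coefficients at i1
    have hc1 : e.repr (Δ (e i1)) i1 = e.repr (d' (e i1)) i1 := by
      have h2 := congrArg (fun z => e.repr z i1) heq'
      simp only [map_add, Finsupp.add_apply] at h2
      rw [hΔoff lst i1 hi1lst h1ne,
        offdiag hzero hsq hne hd' hi1lst h1ne] at h2
      simpa using h2
    have hd'D : ∀ m : Fin n, (m : ℕ) ≠ 0 → d' (e m) = D (e m) := by
      intro m hm
      exact rigid d' hd' i1 (by rw [← hc1]; exact stepB i1 h1ne) m hm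
    have hlst0 : (lst : ℕ) ≠ 0 := by simp [hlst]; omega
    have h3 : Δ (e i1) + Δ (e lst) = d' (e i1) + d' (e lst) := by
      have := heq'
      rwa [map_add, map_add] at this
    rw [hd'D i1 h1n0, hd'D lst hlst0, hmid i1 h1n0 h1ne] at h3
    exact add_left_cancel h3
  -- Δ coincides with the derivation g (e 0)
  have hfin : Δ = g (e ⟨0, hn0⟩) := by
    apply e.ext
    intro i
    by_cases hi0 : (i : ℕ) = 0
    · have : i = ⟨0, hn0⟩ := Fin.ext hi0
      rw [this, ← hΔg (e ⟨0, hn0⟩)]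
    · have hg0 : (g (e ⟨0, hn0⟩)) (e i) = D (e i) := by
        refine rigid (g (e ⟨0, hn0⟩)) (hg (e ⟨0, hn0⟩)) ⟨0, hn0⟩ ?_ i hi0
        rw [← hΔg (e ⟨0, hn0⟩)]
        exact stepB ⟨0, hn0⟩ (by simp; omega)
      rw [hg0]
      by_cases hil : (i : ℕ) = n - 1
      · have : i = ⟨n - 1, by omega⟩ := Fin.ext hil
        rw [this]
        exact hlastv
      · exact hmid i hi0 hil
  rw [hfin]
  exact hg (e ⟨0, hn0⟩)
end

section
/- Let E be an n-dimensional nilpotent evolution algebra with maximal nilindex 2^{n−1}+1. Then every 2-local derivation of E is a derivation (in particular, it is linear). -/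
/-- for an `n`-dimensional nilpotent evolution algebra with maximal
nilindex `2^{n−1}+1`, every 2-local derivation is a derivation (in particular linear). -/
theorem stmt11 {K E : Type*} [Field K] [CharZero K] [NonUnitalNonAssocRing E]
    [Module K E] [SMulCommClass K E E] [IsScalarTower K E E]
    (n : ℕ) (hn : 2 ≤ n) (a : Fin n → Fin n → K) (e : Module.Basis (Fin n) K E)
    (hzero : ∀ i j : Fin n, i ≠ j → e i * e j = 0)
    (hsq : ∀ i : Fin n, e i * e i = ∑ j ∈ Finset.univ.filter (fun j => i < j), a i j • e j)
    (hne : ∀ i : Fin n, ∀ hi : (i : ℕ) + 1 < n, a i ⟨(i : ℕ) + 1, hi⟩ ≠ 0)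
    (D : E → E)
    (hD : ∀ u v : E, ∃ d : Module.End K E, IsDeriv d ∧ D u = d u ∧ D v = d v) :
    ∃ d : Module.End K E, IsDeriv d ∧ ∀ u : E, D u = d u := by
  classical
  have hn0 : 0 < n := by omega
  set z : Fin n := ⟨0, hn0⟩ with hzdef
  -- multiplication against a basis vector picks out one coordinate
  have mulR : ∀ (j : Fin n) (x : E), x * e j = e.repr x j • (e j * e j) := by
    intro j x
    have h : LinearMap.mulRight K (e j) = (e.coord j).smulRight (e j * e j) := by
      apply e.ext
      intro i
      by_cases hij : i = j
      · subst hij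
        simp [LinearMap.mulRight_apply, Module.Basis.coord_apply, Module.Basis.repr_self]
      · simp [LinearMap.mulRight_apply, hzero i j hij, Module.Basis.coord_apply,
          Module.Basis.repr_self, Finsupp.single_apply, hij]
    have := LinearMap.congr_fun h x
    simpa [LinearMap.mulRight_apply, Module.Basis.coord_apply] using this
  have mulL : ∀ (i : Fin n) (x : E), e i * x = e.repr x i • (e i * e i) := by
    intro i x
    have h : LinearMap.mulLeft K (e i) = (e.coord i).smulRight (e i * e i) := by
      apply e.ext
      intro j
      by_cases hij : i = j
      · subst hij
        simp [LinearMap.mulLeft_apply, Module.Basis.coord_apply, Module.Basis.repr_self]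
      · simp [LinearMap.mulLeft_apply, hzero i j hij, Module.Basis.coord_apply,
          Module.Basis.repr_self, Finsupp.single_apply, Ne.symm hij]
    have := LinearMap.congr_fun h x
    simpa [LinearMap.mulLeft_apply, Module.Basis.coord_apply] using this
  -- coordinates of the square of a basis vector
  have hArepr : ∀ i k : Fin n, e.repr (e i * e i) k = if i < k then a i k else 0 := by
    intro i k
    rw [hsq i]
    simp only [map_sum, map_smul, Module.Basis.repr_self, Finsupp.coe_finset_sum,
      Finset.sum_apply, Finsupp.coe_smul, Pi.smul_apply, Finsupp.single_apply,
      smul_eq_mul, mul_ite, mul_one, mul_zero]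
    rw [Finset.sum_ite_eq' _ k (fun j => a i j)]
    simp [Finset.mem_filter]
  -- KEY: a derivation vanishing at `e 0` vanishes identically
  have key : ∀ d : Module.End K E, IsDeriv d → d (e z) = 0 → ∀ x, d x = 0 := by
    intro d hd hd0
    set c : Fin n → Fin n → K := fun p q => e.repr (d (e p)) q with hc
    have hc0 : ∀ q, c z q = 0 := by intro q; simp [hc, hd0]
    -- cross relations, in coordinates
    have R1 : ∀ i j : Fin n, i ≠ j → ∀ k : Fin n,
        c i j * (if j < k then a j k else 0) + c j i * (if i < k then a i k else 0) = 0 := by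
      intro i j hij k
      have h := hd (e i) (e j)
      rw [hzero i j hij, map_zero, mulR j (d (e i)), mulL i (d (e j))] at h
      have h2 := congrArg (fun z => e.repr z k) h.symm
      simp only [map_add, map_smul, Finsupp.coe_add, Finsupp.coe_smul, Pi.add_apply,
        Pi.smul_apply, smul_eq_mul, map_zero, Finsupp.coe_zero, Pi.zero_apply] at h2
      rw [hArepr, hArepr] at h2
      exact h2
    -- square relations, in coordinates
    have R2 : ∀ i k : Fin n,
        (∑ j ∈ Finset.univ.filter (fun j => i < j), a i j * c j k)
          = 2 * c i i * (if i < k then a i k else 0) := by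
      intro i k
      have h := hd (e i) (e i)
      rw [mulR i (d (e i)), mulL i (d (e i))] at h
      have h1 : d (e i * e i)
          = ∑ j ∈ Finset.univ.filter (fun j => i < j), a i j • d (e j) := by
        conv_lhs => rw [hsq i]
        simp [map_sum, map_smul]
      rw [h1] at h
      have h2 := congrArg (fun z => e.repr z k) h
      simp only [map_add, map_smul, map_sum, Finsupp.coe_add, Finsupp.coe_smul,
        Finsupp.coe_finset_sum, Finset.sum_apply, Pi.add_apply, Pi.smul_apply,
        smul_eq_mul] at h2
      rw [hArepr] at h2
      rw [h2]; ring
    -- off-diagonal coefficients vanish (except possibly last column)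
    have OD1 : ∀ i j : Fin n, i < j → ∀ hi : (i : ℕ) + 1 < n, c j i = 0 := by
      intro i j hij hi
      have h := R1 i j (ne_of_lt hij) ⟨(i : ℕ) + 1, hi⟩
      have hjk : ¬ (j < (⟨(i : ℕ) + 1, hi⟩ : Fin n)) := by
        simp only [Fin.lt_def]
        omega
      have hik : i < (⟨(i : ℕ) + 1, hi⟩ : Fin n) := by
        simp only [Fin.lt_def]; omega
      rw [if_neg hjk, if_pos hik, mul_zero, zero_add] at h
      exact (mul_eq_zero.mp h).resolve_right (hne i hi)
    have OD2 : ∀ i j : Fin n, i < j → ∀ hj : (j : ℕ) + 1 < n, c i j = 0 := by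
      intro i j hij hj
      have hi : (i : ℕ) + 1 < n := by
        have := hij; rw [Fin.lt_def] at this; omega
      have h := R1 i j (ne_of_lt hij) ⟨(j : ℕ) + 1, hj⟩
      have hjk : j < (⟨(j : ℕ) + 1, hj⟩ : Fin n) := by
        simp only [Fin.lt_def]; omega
      rw [if_pos hjk, OD1 i j hij hi, zero_mul, add_zero] at h
      exact (mul_eq_zero.mp h).resolve_right (hne j hj)
    have OffDiag : ∀ p q : Fin n, p ≠ q → (q : ℕ) + 1 < n → c p q = 0 := by
      intro p q hpq hq
      rcases lt_or_gt_of_ne hpq with h | h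
      · exact OD2 p q h hq
      · exact OD1 q p h hq
    -- diagonal coefficients vanish, by induction
    have hdiagNat : ∀ m : ℕ, ∀ hm : m < n, c ⟨m, hm⟩ ⟨m, hm⟩ = 0 := by
      intro m
      induction m with
      | zero =>
        intro hm
        have : (⟨0, hm⟩ : Fin n) = z := rfl
        rw [this]; exact hc0 z
      | succ m ih =>
        intro hm
        have hm' : m < n := by omega
        set i : Fin n := ⟨m, hm'⟩
        set k : Fin n := ⟨m + 1, hm⟩
        have hik : i < k := by simp only [i, k, Fin.lt_def]; omega
        have h := R2 i k
        rw [ih hm', mul_zero, zero_mul] at h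
        have hsum : (∑ j ∈ Finset.univ.filter (fun j => i < j), a i j * c j k)
            = a i k * c k k := by
          apply Finset.sum_eq_single k
          · intro j hjmem hjk
            have hji : i < j := (Finset.mem_filter.mp hjmem).2
            have hckj : c j k = 0 := by
              by_cases hkn : (k : ℕ) + 1 < n
              · exact OffDiag j k hjk hkn
              · exfalso
                have h1 := j.isLt
                have h2 : (m : ℕ) < (j : ℕ) := by
                  simpa [i, Fin.lt_def] using hji
                have h3 : ¬ ((m + 1) + 1 < n) := by simpa [k] using hkn
                refine hjk (Fin.ext ?_)
                show (j : ℕ) = m + 1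
                omega
            rw [hckj, mul_zero]
          · intro hk
            exact absurd (Finset.mem_filter.mpr ⟨Finset.mem_univ k, hik⟩) hk
        rw [hsum] at h
        have hank : a i k ≠ 0 := by
          have := hne i (by omega : (i : ℕ) + 1 < n)
          simpa [i, k] using this
        exact (mul_eq_zero.mp h).resolve_left hank
    have hdiag : ∀ p : Fin n, c p p = 0 := fun p => by
      have := hdiagNat p p.isLt
      simpa using this
    -- last column vanishes, by downward induction
    set last : Fin n := ⟨n - 1, by omega⟩ with hlastdef
    have hlastcol : ∀ m : ℕ, ∀ p : Fin n, n - 1 - (p : ℕ) ≤ m → c p last = 0 := by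
      intro m
      induction m with
      | zero =>
        intro p hp
        have : p = last := Fin.ext (by have := p.isLt; simp only [hlastdef]; omega)
        rw [this]; exact hdiag last
      | succ m ih =>
        intro p hp
        by_cases h0 : (p : ℕ) = 0
        · have : p = z := Fin.ext (by simpa [hzdef] using h0)
          rw [this]; exact hc0 last
        by_cases hl : (p : ℕ) = n - 1
        · have : p = last := Fin.ext (by simpa [hlastdef] using hl)
          rw [this]; exact hdiag last
        have hpn : (p : ℕ) < n - 1 := by have := p.isLt; omega
        set i : Fin n := ⟨(p : ℕ) - 1, by omega⟩ with hidef
        have hilast : ¬ (i < last) → False := by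
          intro hcon
          exact hcon (by simp only [Fin.lt_def, hidef, hlastdef]; omega)
        have h := R2 i last
        rw [hdiag i, mul_zero, zero_mul] at h
        have hsum : (∑ j ∈ Finset.univ.filter (fun j => i < j), a i j * c j last)
            = a i p * c p last := by
          apply Finset.sum_eq_single p
          · intro j hjmem hjp
            have hji : i < j := (Finset.mem_filter.mp hjmem).2
            have hjgt : (p : ℕ) < (j : ℕ) := by
              have := hji
              rw [Fin.lt_def] at this
              simp only [hidef] at this
              rcases Nat.lt_or_ge (p : ℕ) ((j : ℕ) + 1) with h1 | h1
              · have : (j : ℕ) ≠ (p : ℕ) := fun hh => hjp (Fin.ext hh)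
                omega
              · omega
            have : n - 1 - (j : ℕ) ≤ m := by omega
            rw [ih j this, mul_zero]
          · intro hk
            exact absurd (Finset.mem_filter.mpr ⟨Finset.mem_univ p,
              by simp only [Fin.lt_def, hidef]; omega⟩) hk
        rw [hsum] at h
        have hip : a i p ≠ 0 := by
          have hii : (i : ℕ) + 1 < n := by simp only [hidef]; omega
          have := hne i hii
          have hpe : (⟨(i : ℕ) + 1, hii⟩ : Fin n) = p := Fin.ext (by simp only [hidef]; omega)
          rwa [hpe] at this
        exact (mul_eq_zero.mp h).resolve_left hip
    -- all coordinates vanish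
    have hbasis : ∀ p : Fin n, d (e p) = 0 := by
      intro p
      have hall : ∀ q : Fin n, c p q = 0 := by
        intro q
        by_cases hpq : p = q
        · subst hpq; exact hdiag p
        by_cases hq : (q : ℕ) + 1 < n
        · exact OffDiag p q hpq hq
        · have : q = last := Fin.ext (by have := q.isLt; simp only [hlastdef]; omega)
          rw [this]
          exact hlastcol (n - 1) p (by omega)
      have : e.repr (d (e p)) = 0 := Finsupp.ext fun q => hall q
      exact (LinearEquiv.map_eq_zero_iff e.repr).mp this
    intro x
    have : d = (0 : Module.End K E) := by
      apply e.ext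
      intro p
      simpa using hbasis p
    rw [this]; rfl
  -- assemble the proof from the 2-local property
  obtain ⟨d, hd, hd0, -⟩ := hD (e z) (e z)
  refine ⟨d, hd, fun u => ?_⟩
  obtain ⟨d', hd', h'0, h'u⟩ := hD (e z) u
  have hsub : IsDeriv (d - d') := by
    intro x y
    simp only [LinearMap.sub_apply, hd x y, hd' x y, sub_mul, mul_sub]
    abel
  have hsub0 : (d - d') (e z) = 0 := by
    simp only [LinearMap.sub_apply, ← hd0, ← h'0, sub_self]
  have := key (d - d') hsub hsub0 u
  rw [LinearMap.sub_apply, sub_eq_zero] at this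
  rw [h'u, ← this]
end

section
/- Let E be an n-dimensional nilpotent evolution algebra with maximal nilindex and structure matrix A = (a_{ij}), with I_A = {(i,j): i+1 < j < n, a_{ij} ≠ 0} nonempty, and suppose gcd over (i,j) ∈ I_A of 2^{j−1} − 2^i equals 2. Then φ is an automorphism of E if and only if φ(e_1) = α e_1 + β e_n with α² = 1, and φ(e_i) = e_i for 2 ≤ i ≤ n. -/
theorem mulrepr {K E : Type*} [Field K] [NonUnitalNonAssocRing E]
    [Module K E] [SMulCommClass K E E] [IsScalarTower K E E]
    {n : ℕ} (a : Fin n → Fin n → K) (e : Module.Basis (Fin n) K E)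
    (hzero : ∀ i j : Fin n, i ≠ j → e i * e j = 0)
    (hsq : ∀ i : Fin n, e i * e i = ∑ j ∈ Finset.univ.filter (fun j => i < j), a i j • e j)
    (x y : E) (m : Fin n) :
    e.repr (x * y) m = ∑ i ∈ Finset.univ.filter (fun i => i < m), e.repr x i * e.repr y i * a i m := by
  have key : x * y = ∑ i : Fin n, (e.repr x i * e.repr y i) • (e i * e i) := by
    conv_lhs => rw [← e.sum_repr x, ← e.sum_repr y]
    rw [Finset.sum_mul_sum]
    refine Finset.sum_congr rfl fun i _ => ?_
    rw [Finset.sum_eq_single i]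
    · rw [smul_mul_smul_comm]
    · intro j _ hj
      rw [smul_mul_smul_comm, hzero i j (Ne.symm hj), smul_zero]
    · intro h; exact absurd (Finset.mem_univ i) h
  have h1 : ∀ i : Fin n, e.repr (e i * e i) m = if i < m then a i m else 0 := by
    intro i
    rw [hsq i, map_sum, Finsupp.coe_finset_sum, Finset.sum_apply]
    simp only [map_smul, Finsupp.smul_apply, e.repr_self, Finsupp.single_apply, smul_eq_mul,
      mul_ite, mul_one, mul_zero]
    rw [Finset.sum_ite_eq' (Finset.univ.filter (fun j => i < j)) m (fun j => a i j)]
    simp [Finset.mem_filter]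
  rw [key, map_sum, Finsupp.coe_finset_sum, Finset.sum_apply]
  simp only [map_smul, Finsupp.smul_apply, h1, smul_eq_mul, mul_ite, mul_zero]
  rw [Finset.sum_ite, Finset.sum_const_zero, add_zero]

set_option maxHeartbeats 1000000 in
theorem stmt13 {K E : Type*} [Field K] [CharZero K] [DecidableEq K]
    [NonUnitalNonAssocRing E]
    [Module K E] [SMulCommClass K E E] [IsScalarTower K E E]
    (n : ℕ) (hn : 2 ≤ n) (a : Fin n → Fin n → K) (e : Module.Basis (Fin n) K E)
    (hzero : ∀ i j : Fin n, i ≠ j → e i * e j = 0)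
    (hsq : ∀ i : Fin n, e i * e i = ∑ j ∈ Finset.univ.filter (fun j => i < j), a i j • e j)
    (hne : ∀ i : Fin n, ∀ hi : (i : ℕ) + 1 < n, a i ⟨(i : ℕ) + 1, hi⟩ ≠ 0)
    (IA : Finset (Fin n × Fin n))
    (hIA : IA = Finset.univ.filter
      (fun p : Fin n × Fin n => ((p.1 : ℕ) + 1) + 1 < (p.2 : ℕ) + 1 ∧ (p.2 : ℕ) + 1 < n
        ∧ a p.1 p.2 ≠ 0))
    (hne' : IA.Nonempty)
    (hgcd : IA.gcd (fun p : Fin n × Fin n => 2 ^ (p.2 : ℕ) - 2 ^ ((p.1 : ℕ) + 1)) = 2)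
    (φ : E →ₗ[K] E) :
    (Function.Bijective φ ∧ ∀ x y : E, φ (x * y) = φ x * φ y) ↔
    ∃ α β : K, α ^ 2 = 1 ∧
      φ (e ⟨0, by omega⟩) = α • e ⟨0, by omega⟩ + β • e ⟨n - 1, by omega⟩ ∧
      ∀ i : Fin n, 1 ≤ (i : ℕ) → φ (e i) = e i := by
  -- basic facts
  have hn4 : 4 ≤ n := by
    obtain ⟨p, hp⟩ := hne'
    rw [hIA, Finset.mem_filter] at hp
    have h1 := hp.2.1
    have h2 := hp.2.2.1
    omega
  set i0 : Fin n := ⟨0, by omega⟩ with hi0def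
  set l : Fin n := ⟨n - 1, by omega⟩ with hldef
  have hi0l : i0 ≠ l := by
    intro h
    have : (0 : ℕ) = n - 1 := congrArg Fin.val h
    omega
  have hlsq : e l * e l = 0 := by
    rw [hsq l]
    apply Finset.sum_eq_zero
    intro k hk
    rw [Finset.mem_filter, Fin.lt_def] at hk
    have := k.isLt
    exfalso
    have : (l : ℕ) = n - 1 := rfl
    omega
  constructor
  · rintro ⟨hbij, hmul⟩
    set c : Fin n → Fin n → K := fun i j => e.repr (φ (e i)) j with hc
    have E2 : ∀ i m : Fin n,
        (∑ k ∈ Finset.univ.filter (fun k => k < m), c i k * c i k * a k m)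
        = ∑ k ∈ Finset.univ.filter (fun k => i < k), a i k * c k m := by
      intro i m
      have h1 : e.repr (φ (e i * e i)) m
          = ∑ k ∈ Finset.univ.filter (fun k => k < m), c i k * c i k * a k m := by
        rw [hmul]; exact mulrepr a e hzero hsq _ _ m
      have h2 : e.repr (φ (e i * e i)) m
          = ∑ k ∈ Finset.univ.filter (fun k => i < k), a i k * c k m := by
        rw [hsq i, map_sum, map_sum, Finsupp.coe_finset_sum, Finset.sum_apply]
        simp [c]
      rw [← h1, h2]
    have E1 : ∀ i j : Fin n, i ≠ j → ∀ m : Fin n,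
        (∑ k ∈ Finset.univ.filter (fun k => k < m), c i k * c j k * a k m) = 0 := by
      intro i j hij m
      have h1 : e.repr (φ (e i * e j)) m
          = ∑ k ∈ Finset.univ.filter (fun k => k < m), c i k * c j k * a k m := by
        rw [hmul]; exact mulrepr a e hzero hsq _ _ m
      rw [hzero i j hij, map_zero] at h1
      simpa using h1.symm
    -- Triangularity
    have TR : ∀ i j : Fin n, (j : ℕ) < (i : ℕ) → c i j = 0 := by
      have main : ∀ N : ℕ, ∀ i j : Fin n, N ≤ (i : ℕ) → (j : ℕ) < N → c i j = 0 := by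
        intro N
        induction N with
        | zero => intro i j _ h; omega
        | succ N ih =>
          have inner : ∀ d : ℕ, ∀ i : Fin n, n ≤ (i : ℕ) + d → N + 1 ≤ (i : ℕ) →
              ∀ j : Fin n, (j : ℕ) < N + 1 → c i j = 0 := by
            intro d
            induction d with
            | zero => intro i hd _ _ _; have := i.isLt; omega
            | succ d ihd =>
              intro i hd hi j hj
              have hi1 : 1 ≤ (i : ℕ) := by omega
              obtain ⟨i', hii'⟩ : ∃ i' : Fin n, (i' : ℕ) + 1 = (i : ℕ) :=
                ⟨⟨(i : ℕ) - 1, by omega⟩, by show (i : ℕ) - 1 + 1 = (i : ℕ); omega⟩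
              have hsplit : Finset.univ.filter (fun k : Fin n => i' < k)
                  = insert i (Finset.univ.filter (fun k : Fin n => i < k)) := by
                ext k
                simp only [Finset.mem_filter, Finset.mem_insert, Finset.mem_univ, true_and,
                  Fin.lt_def, Fin.ext_iff]
                omega
              have h2 := E2 i' j
              rw [hsplit, Finset.sum_insert
                (fun hmem => absurd (Finset.mem_filter.mp hmem).2 (lt_irrefl i))] at h2
              have hL : (∑ k ∈ Finset.univ.filter (fun k => k < j), c i' k * c i' k * a k j) = 0 := by
                apply Finset.sum_eq_zero
                intro k hk
                rw [Finset.mem_filter] at hk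
                have : c i' k = 0 :=
                  ih i' k (by omega) (by have := hk.2; rw [Fin.lt_def] at this; omega)
                rw [this]; ring
              have hR : (∑ k ∈ Finset.univ.filter (fun k => i < k), a i' k * c k j) = 0 := by
                apply Finset.sum_eq_zero
                intro k hk
                rw [Finset.mem_filter, Fin.lt_def] at hk
                rw [ihd k (by omega) (by omega) j hj]; ring
              rw [hL, hR, add_zero] at h2
              have hane : a i' i ≠ 0 := by
                have h := hne i' (by omega)
                have heq : (⟨(i' : ℕ) + 1, by omega⟩ : Fin n) = i := Fin.ext hii'
                rwa [heq] at h
              rcases mul_eq_zero.mp h2.symm with h | h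
              · exact absurd h hane
              · exact h
          intro i j hi hj
          exact inner n i (by omega) hi j hj
      intro i j h
      exact main i i j le_rfl h
    -- nonzero diagonal
    have hdiag : ∀ i : Fin n, c i i ≠ 0 := by
      set M := LinearMap.toMatrix e e φ with hM
      have hdet : M.det ≠ 0 := by
        have h1 := (LinearEquiv.ofBijective φ hbij).isUnit_det e e
        have h2 : ((LinearEquiv.ofBijective φ hbij : E ≃ₗ[K] E) : E →ₗ[K] E) = φ := rfl
        rw [h2] at h1
        exact h1.ne_zero
      have htri : M.BlockTriangular OrderDual.toDual := by
        intro x y h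
        have hxy : (x : ℕ) < (y : ℕ) := h
        rw [hM, LinearMap.toMatrix_apply]
        exact TR y x hxy
      rw [Matrix.det_of_lowerTriangular M htri] at hdet
      intro i hi
      apply hdet
      rw [Finset.prod_eq_zero (Finset.mem_univ i)]
      rw [hM, LinearMap.toMatrix_apply]
      exact hi
    -- off-diagonal vanishing below last column
    have OffDiag : ∀ i j : Fin n, i ≠ j → (j : ℕ) + 1 < n → c i j = 0 := by
      intro i j hij hj
      set m : Fin n := ⟨(j : ℕ) + 1, hj⟩ with hmdef
      have hm : (m : ℕ) = (j : ℕ) + 1 := rfl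
      have h1 := E1 i j hij m
      have h2 : (∑ k ∈ Finset.univ.filter (fun k => k < m), c i k * c j k * a k m)
          = c i j * c j j * a j m := by
        apply Finset.sum_eq_single_of_mem
        · rw [Finset.mem_filter, Fin.lt_def]
          exact ⟨Finset.mem_univ j, by omega⟩
        · intro b hb hbj
          rw [Finset.mem_filter, Fin.lt_def] at hb
          have hbv : (b : ℕ) < (j : ℕ) := by
            have : (b : ℕ) ≠ (j : ℕ) := fun h => hbj (Fin.ext h)
            omega
          rw [TR j b hbv]; ring
      rw [h2] at h1
      have haj : a j m ≠ 0 := hne j hj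
      rcases mul_eq_zero.mp h1 with h | h
      · rcases mul_eq_zero.mp h with h' | h'
        · exact h'
        · exact absurd h' (hdiag j)
      · exact absurd h haj
    -- diagonal relation
    have DiagRel : ∀ i k : Fin n, (i : ℕ) < (k : ℕ) → (k : ℕ) + 1 < n → a i k ≠ 0 →
        c k k = c i i * c i i := by
      intro i k hik hk hak
      have h2 := E2 i k
      have hL : (∑ m ∈ Finset.univ.filter (fun m => m < k), c i m * c i m * a m k)
          = c i i * c i i * a i k := by
        apply Finset.sum_eq_single_of_mem
        · rw [Finset.mem_filter, Fin.lt_def]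
          exact ⟨Finset.mem_univ i, hik⟩
        · intro b hb hbi
          rw [Finset.mem_filter, Fin.lt_def] at hb
          rw [OffDiag i b (Ne.symm hbi) (by omega)]; ring
      have hR : (∑ m ∈ Finset.univ.filter (fun m => i < m), a i m * c m k)
          = a i k * c k k := by
        apply Finset.sum_eq_single_of_mem
        · rw [Finset.mem_filter, Fin.lt_def]
          exact ⟨Finset.mem_univ k, hik⟩
        · intro b hb hbk
          rw [Finset.mem_filter, Fin.lt_def] at hb
          rw [OffDiag b k hbk hk]; ring
      rw [hL, hR] at h2
      exact mul_left_cancel₀ hak (by linear_combination -h2)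
    set α : K := c i0 i0 with hαdef
    have hαne : α ≠ 0 := hdiag i0
    -- powers on the diagonal
    have pow : ∀ k : ℕ, (hk : k ≤ n - 2) → c ⟨k, by omega⟩ ⟨k, by omega⟩ = α ^ 2 ^ k := by
      intro k
      induction k with
      | zero => intro _; simp [hαdef, hi0def]
      | succ k ih =>
        intro hk
        have hk' : k ≤ n - 2 := by omega
        have h1 : a (⟨k, by omega⟩ : Fin n) (⟨k + 1, by omega⟩ : Fin n) ≠ 0 := by
          have h := hne (⟨k, by omega⟩ : Fin n) (by simpa using by omega)
          exact h
        have h2 := DiagRel (⟨k, by omega⟩ : Fin n) (⟨k + 1, by omega⟩ : Fin n)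
          (by simp) (by simp; omega) h1
        rw [h2, ih hk', ← pow_add]
        congr 1
        rw [pow_succ]
        omega
    -- α ^ 2 = 1 from the gcd condition
    have hα2 : α ^ 2 = 1 := by
      have hkey : ∀ p ∈ IA, α ^ (2 ^ (p.2 : ℕ) - 2 ^ ((p.1 : ℕ) + 1)) = 1 := by
        intro p hp
        rw [hIA, Finset.mem_filter] at hp
        obtain ⟨-, h1, h2, h3⟩ := hp
        have hrel := DiagRel p.1 p.2 (by omega) (by omega) h3
        have e1 : (⟨(p.1 : ℕ), by omega⟩ : Fin n) = p.1 := Fin.ext rfl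
        have e2 : (⟨(p.2 : ℕ), by omega⟩ : Fin n) = p.2 := Fin.ext rfl
        have hp1 := pow (p.1 : ℕ) (by omega)
        have hp2 := pow (p.2 : ℕ) (by omega)
        rw [e1] at hp1
        rw [e2] at hp2
        rw [hp1, hp2, ← pow_add] at hrel
        have hle : 2 ^ ((p.1 : ℕ) + 1) ≤ 2 ^ (p.2 : ℕ) :=
          Nat.pow_le_pow_right (by norm_num) (by omega)
        have h2i : 2 ^ (p.1 : ℕ) + 2 ^ (p.1 : ℕ) = 2 ^ ((p.1 : ℕ) + 1) := by
          rw [pow_succ]; omega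
        rw [h2i] at hrel
        have := pow_sub₀ α hαne hle
        rw [this, hrel]
        exact mul_inv_cancel₀ (pow_ne_zero _ hαne)
      have hdvd : orderOf α ∣ 2 := by
        rw [← hgcd]
        exact Finset.dvd_gcd fun p hp => orderOf_dvd_of_pow_eq_one (hkey p hp)
      exact orderOf_dvd_iff_pow_eq_one.mp hdvd
    -- diagonal is 1 for 1 ≤ k ≤ n-2
    have diag1 : ∀ k : Fin n, 1 ≤ (k : ℕ) → (k : ℕ) ≤ n - 2 → c k k = 1 := by
      intro k h1 h2
      have hp := pow (k : ℕ) h2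
      have ek : (⟨(k : ℕ), by omega⟩ : Fin n) = k := Fin.ext rfl
      rw [ek] at hp
      rw [hp]
      have h3 : 2 ^ (k : ℕ) = 2 * 2 ^ ((k : ℕ) - 1) := by
        obtain ⟨m, hm⟩ : ∃ m, (k : ℕ) = m + 1 := ⟨(k : ℕ) - 1, by omega⟩
        rw [hm]
        have h4 : m + 1 - 1 = m := rfl
        rw [h4, pow_succ]; ring
      rw [h3, pow_mul, hα2, one_pow]
    -- last diagonal entry is 1
    have diagl : c l l = 1 := by
      obtain ⟨i2, hi2⟩ : ∃ i2 : Fin n, (i2 : ℕ) = n - 2 :=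
        ⟨⟨n - 2, by omega⟩, rfl⟩
      have hl : (l : ℕ) = n - 1 := rfl
      have h2 := E2 i2 l
      have hL : (∑ m ∈ Finset.univ.filter (fun m => m < l), c i2 m * c i2 m * a m l)
          = c i2 i2 * c i2 i2 * a i2 l := by
        apply Finset.sum_eq_single_of_mem
        · rw [Finset.mem_filter, Fin.lt_def]
          exact ⟨Finset.mem_univ i2, by omega⟩
        · intro b hb hbi
          rw [Finset.mem_filter, Fin.lt_def] at hb
          rw [OffDiag i2 b (Ne.symm hbi) (by omega)]; ring
      have hR : (∑ m ∈ Finset.univ.filter (fun m => i2 < m), a i2 m * c m l)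
          = a i2 l * c l l := by
        apply Finset.sum_eq_single_of_mem
        · rw [Finset.mem_filter, Fin.lt_def]
          exact ⟨Finset.mem_univ l, by omega⟩
        · intro b hb hbl
          rw [Finset.mem_filter, Fin.lt_def] at hb
          exfalso
          have hbv := b.isLt
          have : (b : ℕ) ≠ n - 1 := fun h => hbl (Fin.ext (by rw [h, hl]))
          omega
      rw [hL, hR] at h2
      have hai2 : a i2 l ≠ 0 := by
        have h := hne i2 (by omega)
        have heq : (⟨(i2 : ℕ) + 1, by omega⟩ : Fin n) = l :=
          Fin.ext (by show (i2 : ℕ) + 1 = (l : ℕ); omega)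
        rwa [heq] at h
      have hd1 : c i2 i2 = 1 := diag1 i2 (by omega) (by omega)
      rw [hd1] at h2
      have hcll : a i2 l * c l l = a i2 l * 1 := by linear_combination -h2
      have := mul_left_cancel₀ hai2 hcll
      simpa using this
    -- last column vanishes for 1 ≤ k ≤ n-2
    have lastcol : ∀ k : Fin n, 1 ≤ (k : ℕ) → (k : ℕ) ≤ n - 2 → c k l = 0 := by
      have hl : (l : ℕ) = n - 1 := rfl
      suffices S : ∀ d : ℕ, ∀ k : Fin n, 1 ≤ (k : ℕ) → (k : ℕ) ≤ n - 2 → n - 2 ≤ (k : ℕ) + d →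
          c k l = 0 by
        exact fun k h1 h2 => S (n - 2) k h1 h2 (by omega)
      intro d
      induction d using Nat.strong_induction_on with
      | _ d ihd =>
        intro k h1 h2 hd
        obtain ⟨i', hii'⟩ : ∃ i' : Fin n, (i' : ℕ) + 1 = (k : ℕ) :=
          ⟨⟨(k : ℕ) - 1, by omega⟩, by show (k : ℕ) - 1 + 1 = (k : ℕ); omega⟩
        have h2' := E2 i' l
        have hL : (∑ m ∈ Finset.univ.filter (fun m => m < l), c i' m * c i' m * a m l)
            = c i' i' * c i' i' * a i' l := by
          apply Finset.sum_eq_single_of_mem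
          · rw [Finset.mem_filter, Fin.lt_def]
            exact ⟨Finset.mem_univ i', by omega⟩
          · intro b hb hbi
            rw [Finset.mem_filter, Fin.lt_def] at hb
            rw [OffDiag i' b (Ne.symm hbi) (by omega)]; ring
        have hone : c i' i' * c i' i' = 1 := by
          rcases Nat.eq_zero_or_pos (i' : ℕ) with h0 | h0
          · have hi0' : i' = i0 := Fin.ext (by rw [h0])
            rw [hi0']
            have h := hα2
            rw [pow_two] at h
            exact h
          · rw [diag1 i' h0 (by omega)]; ring
        have hsplit : Finset.univ.filter (fun m : Fin n => i' < m)
            = insert k (Finset.univ.filter (fun m : Fin n => k < m)) := by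
          ext m
          simp only [Finset.mem_filter, Finset.mem_insert, Finset.mem_univ, true_and,
            Fin.lt_def, Fin.ext_iff]
          omega
        have hrest : (∑ m ∈ Finset.univ.filter (fun m : Fin n => k < m), a i' m * c m l)
            = a i' l * c l l := by
          apply Finset.sum_eq_single_of_mem
          · rw [Finset.mem_filter, Fin.lt_def]
            exact ⟨Finset.mem_univ l, by omega⟩
          · intro b hb hbl
            rw [Finset.mem_filter, Fin.lt_def] at hb
            have hbv := b.isLt
            have hbne : (b : ℕ) ≠ n - 1 := fun h => hbl (Fin.ext (by rw [h, hl]))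
            have hd0 : d ≠ 0 := by omega
            rw [ihd (d - 1) (by omega) b (by omega) (by omega) (by omega)]; ring
        rw [hL, hsplit, Finset.sum_insert
          (fun hmem => absurd (Finset.mem_filter.mp hmem).2 (lt_irrefl k)), hrest, hone,
          diagl] at h2'
        have hai : a i' k ≠ 0 := by
          have h := hne i' (by omega)
          have heq : (⟨(i' : ℕ) + 1, by omega⟩ : Fin n) = k := Fin.ext hii'
          rwa [heq] at h
        have := mul_left_cancel₀ hai (show a i' k * c k l = a i' k * 0 by linear_combination -h2')
        simpa using this
    -- assemble the conclusion
    refine ⟨α, c i0 l, hα2, ?_, ?_⟩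
    · apply e.repr.injective
      ext j
      rw [map_add, map_smul, map_smul, e.repr_self, e.repr_self]
      simp only [Finsupp.coe_add, Finsupp.coe_smul, Pi.add_apply, Pi.smul_apply,
        Finsupp.single_apply, smul_eq_mul]
      by_cases hj0 : j = i0
      · subst hj0
        simp [if_pos rfl, if_neg (Ne.symm hi0l), hαdef]
        rfl
      · by_cases hjl : j = l
        · subst hjl
          simp [if_neg hi0l, if_pos rfl]
          rfl
        · have hjv : (j : ℕ) + 1 < n := by
            have := j.isLt
            have : (j : ℕ) ≠ n - 1 := fun h => hjl (Fin.ext h)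
            omega
          rw [if_neg (fun h => hj0 (Eq.symm h)), if_neg (fun h => hjl (Eq.symm h))]
          simpa using OffDiag i0 j (fun h => hj0 h.symm) hjv
    · intro i hi
      apply e.repr.injective
      ext j
      rw [e.repr_self]
      rw [Finsupp.single_apply]
      by_cases hij : i = j
      · subst hij
        rw [if_pos rfl]
        rcases Nat.lt_or_ge (i : ℕ) (n - 1) with h | h
        · exact diag1 i hi (by omega)
        · have : i = l := Fin.ext (by have := i.isLt; show (i : ℕ) = n - 1; omega)
          rw [this]; exact diagl
      · rw [if_neg hij]
        rcases Nat.lt_or_ge ((j : ℕ) + 1) n with h | h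
        · exact OffDiag i j hij h
        · have hjl : j = l := Fin.ext (by have := j.isLt; show (j : ℕ) = n - 1; omega)
          subst hjl
          have hil : (i : ℕ) ≠ n - 1 := fun hh => hij (Fin.ext hh)
          exact lastcol i hi (by have := i.isLt; omega)
  · rintro ⟨α, β, hα2, h0, hfix⟩
    have hαα : α * α = 1 := by rw [← pow_two]; exact hα2
    have h0' : φ (e i0) = α • e i0 + β • e l := h0
    have hl1 : 1 ≤ (l : ℕ) := by show 1 ≤ n - 1; omega
    have hφl : φ (e l) = e l := hfix l hl1
    -- squares are preserved
    have hsqfix : ∀ i : Fin n, φ (e i * e i) = e i * e i := by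
      intro i
      rw [hsq i, map_sum]
      refine Finset.sum_congr rfl fun k hk => ?_
      rw [Finset.mem_filter, Fin.lt_def] at hk
      rw [map_smul, hfix k (by omega)]
    -- multiplicativity on basis vectors
    have key : ∀ i j : Fin n, φ (e i * e j) = φ (e i) * φ (e j) := by
      intro i j
      by_cases hij : i = j
      · subst hij
        rw [hsqfix i]
        by_cases hi : (i : ℕ) = 0
        · have hii0 : i = i0 := Fin.ext hi
          subst hii0
          rw [h0', add_mul, mul_add, mul_add, smul_mul_smul_comm, smul_mul_smul_comm,
            smul_mul_smul_comm, smul_mul_smul_comm, hzero i0 l hi0l, hzero l i0 (Ne.symm hi0l),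
            hlsq, hαα, smul_zero, smul_zero, smul_zero, add_zero, add_zero, one_smul, add_zero]
        · rw [hfix i (by omega)]
      · rw [hzero i j hij, map_zero]
        by_cases hi : (i : ℕ) = 0
        · have hii0 : i = i0 := Fin.ext hi
          subst hii0
          have hj1 : 1 ≤ (j : ℕ) := by
            rcases Nat.eq_zero_or_pos (j : ℕ) with h | h
            · exact absurd (Fin.ext (by rw [h] : (i0 : ℕ) = (j : ℕ)).symm).symm hij
            · exact h
          rw [h0', hfix j hj1, add_mul, smul_mul_assoc, smul_mul_assoc,
            hzero i0 j hij]
          by_cases hjl : j = l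
          · subst hjl; rw [hlsq]; simp
          · rw [hzero l j (fun h => hjl h.symm)]; simp
        · rw [hfix i (by omega)]
          by_cases hj : (j : ℕ) = 0
          · have hjj0 : j = i0 := Fin.ext hj
            subst hjj0
            rw [h0', mul_add, mul_smul_comm, mul_smul_comm, hzero i i0 hij]
            by_cases hil : i = l
            · subst hil; rw [hlsq]; simp
            · rw [hzero i l hil]; simp
          · rw [hfix j (by omega), hzero i j hij]
    -- extend multiplicativity by bilinearity
    have hmul : ∀ x y : E, φ (x * y) = φ x * φ y := by
      have hBB : (LinearMap.mul K E).compr₂ φ = ((LinearMap.mul K E).comp φ).compl₂ φ := by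
        refine e.ext fun i => e.ext fun j => ?_
        simpa using key i j
      intro x y
      simpa using LinearMap.congr_fun (LinearMap.congr_fun hBB x) y
    -- bijectivity via explicit inverse
    set ψ : E →ₗ[K] E :=
      e.constr K (fun i : Fin n => if (i : ℕ) = 0 then α • e i0 - (α * β) • e l else e i)
      with hψdef
    have hψ0 : ψ (e i0) = α • e i0 - (α * β) • e l := by
      rw [hψdef, Module.Basis.constr_basis]
      simp [hi0def]
    have hψi : ∀ i : Fin n, 1 ≤ (i : ℕ) → ψ (e i) = e i := by
      intro i hi
      rw [hψdef, Module.Basis.constr_basis]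
      rw [if_neg (by omega)]
    have hψl : ψ (e l) = e l := hψi l hl1
    have hright : ∀ x, φ (ψ x) = x := by
      have : φ.comp ψ = LinearMap.id := by
        refine e.ext fun i => ?_
        by_cases hi : (i : ℕ) = 0
        · have hii0 : i = i0 := Fin.ext hi
          subst hii0
          rw [LinearMap.comp_apply, hψ0, map_sub, map_smul, map_smul, h0', hφl,
            smul_add, smul_smul, smul_smul, hαα, one_smul, LinearMap.id_apply]
          abel
        · rw [LinearMap.comp_apply, hψi i (by omega), hfix i (by omega), LinearMap.id_apply]
      intro x
      simpa using LinearMap.congr_fun this x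
    have hleft : ∀ x, ψ (φ x) = x := by
      have : ψ.comp φ = LinearMap.id := by
        refine e.ext fun i => ?_
        by_cases hi : (i : ℕ) = 0
        · have hii0 : i = i0 := Fin.ext hi
          subst hii0
          rw [LinearMap.comp_apply, h0', map_add, map_smul, map_smul, hψ0, hψl,
            smul_sub, smul_smul, smul_smul, hαα, one_smul, LinearMap.id_apply]
          have : α * (α * β) = β := by
            rw [← mul_assoc, hαα, one_mul]
          rw [this]
          abel
        · rw [LinearMap.comp_apply, hfix i (by omega), hψi i (by omega), LinearMap.id_apply]
      intro x
      simpa using LinearMap.congr_fun this x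
    exact ⟨Function.bijective_iff_has_inverse.mpr ⟨ψ, hleft, hright⟩, hmul⟩
end

section
/- For n ≥ 5 over a field K of characteristic 0, the n-dimensional evolution algebra E₁ with e_1² = e_2 + e_3 + e_4, e_i² = e_{i+1} for 1 < i < n, e_n² = 0, and the n-dimensional evolution algebra E₂ with f_1² = f_2 + f_3, f_i² = f_{i+1} for 1 < i < n, f_n² = 0, are not isomorphic as algebras. -/
/-- for `n ≥ 5` over a field of characteristic 0, the evolution algebra with
`e_1² = e_2 + e_3 + e_4`, `e_i² = e_{i+1}` (`1 < i < n`), `e_n² = 0` and the evolution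
algebra with `f_1² = f_2 + f_3`, `f_i² = f_{i+1}` (`1 < i < n`), `f_n² = 0` are not
isomorphic as algebras. -/
theorem stmt14 {K E₁ E₂ : Type*} [Field K] [CharZero K]
    [NonUnitalNonAssocRing E₁] [Module K E₁] [SMulCommClass K E₁ E₁] [IsScalarTower K E₁ E₁]
    [NonUnitalNonAssocRing E₂] [Module K E₂] [SMulCommClass K E₂ E₂] [IsScalarTower K E₂ E₂]
    (n : ℕ) (hn : 5 ≤ n)
    (e : Module.Basis (Fin n) K E₁) (f : Module.Basis (Fin n) K E₂)
    (he0 : ∀ i j : Fin n, i ≠ j → e i * e j = 0)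
    (hf0 : ∀ i j : Fin n, i ≠ j → f i * f j = 0)
    (he1 : e ⟨0, by omega⟩ * e ⟨0, by omega⟩
        = e ⟨1, by omega⟩ + e ⟨2, by omega⟩ + e ⟨3, by omega⟩)
    (he2 : ∀ i : Fin n, 1 ≤ (i : ℕ) → ∀ hi : (i : ℕ) + 1 < n,
        e i * e i = e ⟨(i : ℕ) + 1, hi⟩)
    (he3 : e ⟨n - 1, by omega⟩ * e ⟨n - 1, by omega⟩ = 0)
    (hf1 : f ⟨0, by omega⟩ * f ⟨0, by omega⟩ = f ⟨1, by omega⟩ + f ⟨2, by omega⟩)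
    (hf2 : ∀ i : Fin n, 1 ≤ (i : ℕ) → ∀ hi : (i : ℕ) + 1 < n,
        f i * f i = f ⟨(i : ℕ) + 1, hi⟩)
    (hf3 : f ⟨n - 1, by omega⟩ * f ⟨n - 1, by omega⟩ = 0) :
    ¬ ∃ ψ : E₁ ≃ₗ[K] E₂, ∀ x y : E₁, ψ (x * y) = ψ x * ψ y := by
  rintro ⟨ψ, hm⟩
  -- squares of basis vectors, coordinatewise
  have hsq : ∀ j m : Fin n, f.repr (f j * f j) m =
      if (j : ℕ) = 0 then ((if (m : ℕ) = 1 then 1 else 0) + (if (m : ℕ) = 2 then (1:K) else 0))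
      else (if (j : ℕ) + 1 = (m : ℕ) then (1:K) else 0) := by
    intro j m
    rcases Nat.eq_zero_or_pos (j : ℕ) with hj | hj
    · have hj' : j = ⟨0, by omega⟩ := Fin.ext hj
      rw [hj', hf1, map_add]
      simp only [Module.Basis.repr_self, Finsupp.coe_add, Pi.add_apply, Finsupp.single_apply,
        Fin.ext_iff, Fin.val_mk]
      split_ifs <;> first | omega | contradiction | ring | norm_num
    · rw [if_neg (by omega)]
      by_cases hj2 : (j : ℕ) + 1 < n
      · rw [hf2 j hj hj2, Module.Basis.repr_self, Finsupp.single_apply]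
        simp only [Fin.ext_iff, Fin.val_mk]
      · have hj' : j = ⟨n - 1, by omega⟩ := Fin.ext (by have := j.isLt; simp only [Fin.val_mk]; omega)
        rw [hj', hf3, map_zero]
        have hm' := m.isLt
        rw [if_neg (by simp only [Fin.val_mk]; omega)]
        rfl
  -- product formula
  have hkey : ∀ x y : E₂, x * y = ∑ j : Fin n, (f.repr x j * f.repr y j) • (f j * f j) := by
    intro x y
    conv_lhs => rw [← Module.Basis.sum_repr f x, ← Module.Basis.sum_repr f y]
    rw [Finset.sum_mul_sum]
    refine Finset.sum_congr rfl fun i _ => ?_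
    rw [Finset.sum_eq_single i]
    · rw [smul_mul_assoc, mul_smul_comm, smul_smul]
    · intro j _ hji
      rw [smul_mul_assoc, mul_smul_comm, hf0 i j (Ne.symm hji), smul_zero, smul_zero]
    · intro h; exact absurd (Finset.mem_univ i) h
  have hkey' : ∀ x y : E₂, ∀ m : Fin n,
      f.repr (x * y) m = ∑ j : Fin n, f.repr x j * f.repr y j * f.repr (f j * f j) m := by
    intro x y m
    rw [hkey, map_sum, Finset.sum_apply']
    exact Finset.sum_congr rfl fun j _ => by rw [map_smul, Finsupp.smul_apply, smul_eq_mul]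
  -- coordinate 0 of any product is 0
  have hc0 : ∀ x y : E₂, f.repr (x * y) ⟨0, by omega⟩ = 0 := by
    intro x y
    rw [hkey']
    refine Finset.sum_eq_zero fun j _ => ?_
    rw [hsq]
    simp only [Fin.val_mk]
    split_ifs <;> first | omega | contradiction | ring | norm_num
  -- coordinate 1 of a product
  have hc1 : ∀ x y : E₂, f.repr (x * y) ⟨1, by omega⟩
      = f.repr x ⟨0, by omega⟩ * f.repr y ⟨0, by omega⟩ := by
    intro x y
    rw [hkey', Finset.sum_eq_single (⟨0, by omega⟩ : Fin n)]
    · rw [hsq]; simp only [Fin.val_mk]; norm_num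
    · intro j _ hj
      have hj' : (j : ℕ) ≠ 0 := fun h => hj (Fin.ext h)
      rw [hsq]
      simp only [Fin.val_mk]
      split_ifs <;> first | omega | contradiction | ring | norm_num
    · intro h; exact absurd (Finset.mem_univ _) h
  -- coordinate M+1 of a product, for 1 ≤ M
  have hcs : ∀ x y : E₂, ∀ (m : Fin n) (M : ℕ), 1 ≤ M → (m : ℕ) = M + 1 → ∀ hMn : M < n,
      f.repr (x * y) m =
        (if M = 1 then f.repr x ⟨0, by omega⟩ * f.repr y ⟨0, by omega⟩ else 0)
        + f.repr x ⟨M, hMn⟩ * f.repr y ⟨M, hMn⟩ := by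
    intro x y m M hM1 hmM hMn
    rw [hkey']
    have hptw : ∀ j : Fin n, f.repr x j * f.repr y j * f.repr (f j * f j) m
        = (if j = (⟨0, by omega⟩ : Fin n)
            then (if M = 1 then f.repr x ⟨0, by omega⟩ * f.repr y ⟨0, by omega⟩ else 0) else 0)
          + (if j = (⟨M, hMn⟩ : Fin n)
            then f.repr x ⟨M, hMn⟩ * f.repr y ⟨M, hMn⟩ else 0) := by
      intro j
      by_cases hj0 : (j : ℕ) = 0
      · rw [show j = ⟨0, by omega⟩ from Fin.ext hj0, hsq]
        simp only [Fin.val_mk, Fin.ext_iff, hmM]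
        split_ifs <;> first | omega | contradiction | ring | norm_num
      · by_cases hjM : (j : ℕ) = M
        · rw [show j = ⟨M, hMn⟩ from Fin.ext hjM, hsq]
          simp only [Fin.val_mk, Fin.ext_iff, hmM]
          split_ifs <;> first | omega | contradiction | ring | norm_num
        · rw [hsq]
          simp only [Fin.val_mk, Fin.ext_iff, hmM]
          split_ifs <;> first | omega | contradiction | ring | norm_num
    rw [Finset.sum_congr rfl fun j _ => hptw j, Finset.sum_add_distrib,
      Finset.sum_ite_eq' Finset.univ, Finset.sum_ite_eq' Finset.univ,
      if_pos (Finset.mem_univ _), if_pos (Finset.mem_univ _)]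
  -- multiplication rules for e, with clean indices
  have hee : ∀ (k k' : ℕ) (_ : 1 ≤ k) (hkk : k + 1 = k') (hk' : k' < n),
      e ⟨k, by omega⟩ * e ⟨k, by omega⟩ = e ⟨k', hk'⟩ := by
    intro k k' h1 hkk hk'
    subst hkk
    exact he2 ⟨k, by omega⟩ h1 hk'
  -- zero products transported through ψ
  have hne : ∀ (k l : ℕ) (hk : k < n) (hl : l < n), k ≠ l →
      ψ (e ⟨k, hk⟩) * ψ (e ⟨l, hl⟩) = 0 := by
    intro k l hk hl hkl
    rw [← hm, he0 _ _ (fun h => hkl (by simpa [Fin.ext_iff] using h)), map_zero]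
  -- squares transported through ψ
  have hψ2 : ψ (e ⟨2, by omega⟩) = ψ (e ⟨1, by omega⟩) * ψ (e ⟨1, by omega⟩) := by
    rw [← hm, hee 1 2 le_rfl rfl (by omega)]
  have hψ3 : ψ (e ⟨3, by omega⟩) = ψ (e ⟨2, by omega⟩) * ψ (e ⟨2, by omega⟩) := by
    rw [← hm, hee 2 3 (by omega) rfl (by omega)]
  have hQ : ψ (e ⟨0, by omega⟩) * ψ (e ⟨0, by omega⟩)
      = ψ (e ⟨1, by omega⟩) + ψ (e ⟨2, by omega⟩) + ψ (e ⟨3, by omega⟩) := by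
    rw [← hm, he1, map_add, map_add]
  -- b0 = 0
  have hb0 : f.repr (ψ (e ⟨1, by omega⟩)) ⟨0, by omega⟩ = 0 := by
    have h : ψ (e ⟨1, by omega⟩)
        = ψ (e ⟨0, by omega⟩) * ψ (e ⟨0, by omega⟩)
          - ψ (e ⟨2, by omega⟩) - ψ (e ⟨3, by omega⟩) := by
      rw [hQ]; abel
    rw [h, hψ2, hψ3]
    simp only [map_sub, Finsupp.coe_sub, Pi.sub_apply]
    rw [hc0, hc0, hc0]
    ring
  -- a0 ≠ 0
  have ha0 : f.repr (ψ (e ⟨0, by omega⟩)) ⟨0, by omega⟩ ≠ 0 := by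
    intro h0
    have hall : ∀ i : Fin n, f.repr (ψ (e i)) ⟨0, by omega⟩ = 0 := by
      intro i
      by_cases hi0 : (i : ℕ) = 0
      · rw [show i = ⟨0, by omega⟩ from Fin.ext hi0]; exact h0
      · by_cases hi1 : (i : ℕ) = 1
        · rw [show i = ⟨1, by omega⟩ from Fin.ext hi1]; exact hb0
        · have hi2 : 2 ≤ (i : ℕ) := by omega
          have hilt := i.isLt
          have hstep : e i = e ⟨(i : ℕ) - 1, by omega⟩ * e ⟨(i : ℕ) - 1, by omega⟩ := by
            rw [hee ((i : ℕ) - 1) (i : ℕ) (by omega) (by omega) i.isLt]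
          rw [hstep, hm]
          exact hc0 _ _
    have hx : ∀ x : E₁, f.repr (ψ x) ⟨0, by omega⟩ = 0 := by
      intro x
      conv_lhs => rw [← Module.Basis.sum_repr e x]
      rw [map_sum, map_sum, Finset.sum_apply']
      refine Finset.sum_eq_zero fun i _ => ?_
      rw [map_smul, map_smul, Finsupp.smul_apply, hall, smul_zero]
    have h1 := hx (ψ.symm (f ⟨0, by omega⟩))
    rw [LinearEquiv.apply_symm_apply, Module.Basis.repr_self, Finsupp.single_apply, if_pos rfl] at h1
    exact one_ne_zero h1
  -- now the scalar chain
  -- coordinate 1 of ψ(e2), ψ(e3) vanish; of ψ(e1) equals a0²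
  have hC0 : f.repr (ψ (e ⟨2, by omega⟩)) ⟨0, by omega⟩ = 0 := by
    rw [hψ2]; exact hc0 _ _
  have hC1 : f.repr (ψ (e ⟨2, by omega⟩)) ⟨1, by omega⟩ = 0 := by
    rw [hψ2, hc1, hb0, mul_zero]
  have hG1 : f.repr (ψ (e ⟨3, by omega⟩)) ⟨1, by omega⟩ = 0 := by
    rw [hψ3, hc1, hC0, mul_zero]
  have hB1 : f.repr (ψ (e ⟨1, by omega⟩)) ⟨1, by omega⟩
      = f.repr (ψ (e ⟨0, by omega⟩)) ⟨0, by omega⟩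
        * f.repr (ψ (e ⟨0, by omega⟩)) ⟨0, by omega⟩ := by
    have h := hc1 (ψ (e ⟨0, by omega⟩)) (ψ (e ⟨0, by omega⟩))
    rw [hQ] at h
    simp only [Finsupp.coe_add, Pi.add_apply, map_add] at h
    rw [hC1, hG1] at h
    linear_combination h
  have ha0' := mul_ne_zero ha0 ha0
  -- a1 = 0
  have hA1 : f.repr (ψ (e ⟨0, by omega⟩)) ⟨1, by omega⟩ = 0 := by
    have h := hcs (ψ (e ⟨0, by omega⟩)) (ψ (e ⟨1, by omega⟩)) ⟨2, by omega⟩ 1 le_rfl rfl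
      (by omega)
    rw [hne 0 1 (by omega) (by omega) (by omega), if_pos rfl, hb0, mul_zero, hB1] at h
    simp only [map_zero, Finsupp.coe_zero, Pi.zero_apply, zero_add] at h
    rcases mul_eq_zero.mp h.symm with h' | h'
    · exact h'
    · exact absurd h' ha0'
  -- coordinate 2 of ψ(e2)
  have hC2 : f.repr (ψ (e ⟨2, by omega⟩)) ⟨2, by omega⟩
      = (f.repr (ψ (e ⟨0, by omega⟩)) ⟨0, by omega⟩
          * f.repr (ψ (e ⟨0, by omega⟩)) ⟨0, by omega⟩)
        * (f.repr (ψ (e ⟨0, by omega⟩)) ⟨0, by omega⟩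
          * f.repr (ψ (e ⟨0, by omega⟩)) ⟨0, by omega⟩) := by
    have h := hcs (ψ (e ⟨1, by omega⟩)) (ψ (e ⟨1, by omega⟩)) ⟨2, by omega⟩ 1 le_rfl rfl
      (by omega)
    rw [← hψ2, if_pos rfl, hb0, hB1, mul_zero, zero_add] at h
    exact h
  -- coordinate 2 of ψ(e1) is 0
  have hB2 : f.repr (ψ (e ⟨1, by omega⟩)) ⟨2, by omega⟩ = 0 := by
    have h := hcs (ψ (e ⟨1, by omega⟩)) (ψ (e ⟨2, by omega⟩)) ⟨3, by omega⟩ 2 (by omega) rfl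
      (by omega)
    rw [hne 1 2 (by omega) (by omega) (by omega), if_neg (by omega), hC2] at h
    simp only [map_zero, Finsupp.coe_zero, Pi.zero_apply, zero_add] at h
    rcases mul_eq_zero.mp h.symm with h' | h'
    · exact h'
    · exact absurd h' (mul_ne_zero ha0' ha0')
  -- coordinate 2 of ψ(e3) is 0
  have hG2 : f.repr (ψ (e ⟨3, by omega⟩)) ⟨2, by omega⟩ = 0 := by
    have h := hcs (ψ (e ⟨2, by omega⟩)) (ψ (e ⟨2, by omega⟩)) ⟨2, by omega⟩ 1 le_rfl rfl
      (by omega)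
    rw [← hψ3, if_pos rfl, hC0, hC1, mul_zero, zero_add] at h
    exact h
  -- a0² = 1
  have hα : f.repr (ψ (e ⟨0, by omega⟩)) ⟨0, by omega⟩
      * f.repr (ψ (e ⟨0, by omega⟩)) ⟨0, by omega⟩ = 1 := by
    have h := hcs (ψ (e ⟨0, by omega⟩)) (ψ (e ⟨0, by omega⟩)) ⟨2, by omega⟩ 1 le_rfl rfl
      (by omega)
    rw [hQ, if_pos rfl, hA1] at h
    simp only [map_add, Finsupp.coe_add, Pi.add_apply, mul_zero, add_zero] at h
    rw [hB2, hC2, hG2] at h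
    refine mul_left_cancel₀ ha0' ?_
    linear_combination h
  -- coordinate 3 of ψ(e2) is 0
  have hC3 : f.repr (ψ (e ⟨2, by omega⟩)) ⟨3, by omega⟩ = 0 := by
    have h := hcs (ψ (e ⟨1, by omega⟩)) (ψ (e ⟨1, by omega⟩)) ⟨3, by omega⟩ 2 (by omega) rfl
      (by omega)
    rw [← hψ2, if_neg (by omega), hB2, mul_zero, zero_add] at h
    exact h
  -- coordinate 3 of ψ(e3) is 1
  have hG3 : f.repr (ψ (e ⟨3, by omega⟩)) ⟨3, by omega⟩ = 1 := by
    have h := hcs (ψ (e ⟨2, by omega⟩)) (ψ (e ⟨2, by omega⟩)) ⟨3, by omega⟩ 2 (by omega) rfl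
      (by omega)
    rw [← hψ3, if_neg (by omega), hC2, hα, zero_add] at h
    simpa using h
  -- coordinate 3 of ψ(e1) is 0
  have hB3 : f.repr (ψ (e ⟨1, by omega⟩)) ⟨3, by omega⟩ = 0 := by
    have h := hcs (ψ (e ⟨1, by omega⟩)) (ψ (e ⟨3, by omega⟩)) ⟨4, by omega⟩ 3 (by omega) rfl
      (by omega)
    rw [hne 1 3 (by omega) (by omega) (by omega), if_neg (by omega), hG3, mul_one] at h
    simp only [map_zero, Finsupp.coe_zero, Pi.zero_apply, zero_add] at h
    exact h.symm
  -- a2 = 0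
  have hA2 : f.repr (ψ (e ⟨0, by omega⟩)) ⟨2, by omega⟩ = 0 := by
    have h := hcs (ψ (e ⟨0, by omega⟩)) (ψ (e ⟨2, by omega⟩)) ⟨3, by omega⟩ 2 (by omega) rfl
      (by omega)
    rw [hne 0 2 (by omega) (by omega) (by omega), if_neg (by omega), hC2, hα, one_mul,
      mul_one] at h
    simp only [map_zero, Finsupp.coe_zero, Pi.zero_apply, zero_add] at h
    exact h.symm
  -- the contradiction: coordinate 3 of ψ(e0)² is both 0 and 1
  have h := hcs (ψ (e ⟨0, by omega⟩)) (ψ (e ⟨0, by omega⟩)) ⟨3, by omega⟩ 2 (by omega) rfl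
    (by omega)
  rw [hQ, if_neg (by omega), hA2, mul_zero, zero_add] at h
  simp only [map_add, Finsupp.coe_add, Pi.add_apply] at h
  rw [hB3, hC3, hG3] at h
  norm_num at h
end

section
/- Let E be the 2-dimensional evolution algebra with e_1² = e_2, e_2² = 0. A linear map ψ on E is a local automorphism if and only if its matrix in the basis {e_1, e_2} is [[α, β],[0, γ²]] for some α, β, γ ∈ K with αγ ≠ 0. -/
set_option linter.unusedSectionVars false

/-- An automorphism of a (non-associative, non-unital) algebra: a bijective
multiplicative linear map. -/
def IsAut {K E : Type*} [Field K] [NonUnitalNonAssocRing E] [Module K E]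
    (φ : E →ₗ[K] E) : Prop :=
  Function.Bijective φ ∧ ∀ x y : E, φ (x * y) = φ x * φ y

/-- A local automorphism: a linear map agreeing at each point with some automorphism. -/
def IsLocalAut {K E : Type*} [Field K] [NonUnitalNonAssocRing E] [Module K E]
    (ψ : E →ₗ[K] E) : Prop :=
  ∀ u : E, ∃ φ : E →ₗ[K] E, IsAut φ ∧ ψ u = φ u

section Aux

variable {K E : Type*} [Field K] [NonUnitalNonAssocRing E]
    [Module K E] [SMulCommClass K E E] [IsScalarTower K E E]
    (e : Module.Basis (Fin 2) K E)

/-- The candidate automorphism `e0 ↦ a e0 + b e1`, `e1 ↦ a² e1`. -/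
noncomputable def mkAut (a b : K) : E →ₗ[K] E :=
  e.constr K ![a • e 0 + b • e 1, (a ^ 2) • e 1]

lemma mkAut_e0 (a b : K) : mkAut e a b (e 0) = a • e 0 + b • e 1 := by
  simp [mkAut]

lemma mkAut_e1 (a b : K) : mkAut e a b (e 1) = (a ^ 2) • e 1 := by
  simp [mkAut]

/-- The inverse of `mkAut`. -/
noncomputable def mkInv (a b : K) : E →ₗ[K] E :=
  e.constr K ![a⁻¹ • e 0 - (b / a ^ 3) • e 1, (a ^ 2)⁻¹ • e 1]

lemma mkInv_e0 (a b : K) : mkInv e a b (e 0) = a⁻¹ • e 0 - (b / a ^ 3) • e 1 := by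
  simp [mkInv]

lemma mkInv_e1 (a b : K) : mkInv e a b (e 1) = (a ^ 2)⁻¹ • e 1 := by
  simp [mkInv]

variable (hzero : ∀ i j : Fin 2, i ≠ j → e i * e j = 0)
  (h1 : e 0 * e 0 = e 1) (h2 : e 1 * e 1 = 0)

include hzero h1 h2 in
lemma prod_eq (p q r s : K) :
    (p • e 0 + q • e 1) * (r • e 0 + s • e 1) = (p * r) • e 1 := by
  have h01 : e 0 * e 1 = 0 := hzero 0 1 (by decide)
  have h10 : e 1 * e 0 = 0 := hzero 1 0 (by decide)
  rw [add_mul, mul_add, mul_add, smul_mul_assoc, smul_mul_assoc, smul_mul_assoc,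
    smul_mul_assoc, mul_smul_comm, mul_smul_comm, mul_smul_comm, mul_smul_comm,
    h1, h01, h10, h2]
  simp [smul_smul]

lemma repr_two (u : E) : e.repr u 0 • e 0 + e.repr u 1 • e 1 = u := by
  have := e.sum_repr u
  rwa [Fin.sum_univ_two] at this

include hzero h1 h2 in
lemma mkAut_isAut {a : K} (b : K) (ha : a ≠ 0) : IsAut (mkAut e a b) := by
  constructor
  · have hL : (mkInv e a b) ∘ₗ (mkAut e a b) = LinearMap.id := by
      apply e.ext
      intro i
      fin_cases i
      · show mkInv e a b (mkAut e a b (e 0)) = e 0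
        rw [mkAut_e0, map_add, map_smul, map_smul, mkInv_e0, mkInv_e1]
        match_scalars
        · field_simp
        · field_simp
          ring
      · show mkInv e a b (mkAut e a b (e 1)) = e 1
        rw [mkAut_e1, map_smul, mkInv_e1]
        match_scalars
        field_simp
    have hR : (mkAut e a b) ∘ₗ (mkInv e a b) = LinearMap.id := by
      apply e.ext
      intro i
      fin_cases i
      · show mkAut e a b (mkInv e a b (e 0)) = e 0
        rw [mkInv_e0, map_sub, map_smul, map_smul, mkAut_e0, mkAut_e1]
        match_scalars
        · field_simp
        · field_simp
          ring
      · show mkAut e a b (mkInv e a b (e 1)) = e 1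
        rw [mkInv_e1, map_smul, mkAut_e1]
        match_scalars
        field_simp
    have hL' : Function.LeftInverse (mkInv e a b) (mkAut e a b) := fun x =>
      congrArg (fun f : E →ₗ[K] E => f x) hL
    have hR' : Function.RightInverse (mkInv e a b) (mkAut e a b) := fun x =>
      congrArg (fun f : E →ₗ[K] E => f x) hR
    exact ⟨hL'.injective, hR'.surjective⟩
  · intro u v
    have hu := repr_two e u
    have hv := repr_two e v
    set x := e.repr u 0; set y := e.repr u 1
    set z := e.repr v 0; set w := e.repr v 1
    have hx : ∀ p q : K, p • (a • e 0 + b • e 1) + q • ((a ^ 2) • e 1)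
        = (p * a) • e 0 + (p * b + q * a ^ 2) • e 1 := by
      intro p q
      match_scalars <;> ring
    rw [← hu, ← hv, prod_eq e hzero h1 h2, map_smul, mkAut_e1, map_add, map_add,
      map_smul, map_smul, map_smul, map_smul, mkAut_e0, mkAut_e1, hx, hx,
      prod_eq e hzero h1 h2]
    match_scalars
    ring

include hzero h1 h2 in
/-- Every automorphism has the form `e0 ↦ a e0 + b e1`, `e1 ↦ a² e1` with `a ≠ 0`. -/
lemma aut_form {φ : E →ₗ[K] E} (hφ : IsAut φ) :
    ∃ a b : K, a ≠ 0 ∧ φ (e 0) = a • e 0 + b • e 1 ∧ φ (e 1) = (a ^ 2) • e 1 := by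
  obtain ⟨hbij, hmul⟩ := hφ
  set a := e.repr (φ (e 0)) 0 with ha_def
  set b := e.repr (φ (e 0)) 1 with hb_def
  have h0 : φ (e 0) = a • e 0 + b • e 1 := (repr_two e _).symm
  have hφ1 : φ (e 1) = (a ^ 2) • e 1 := by
    have h : φ (e 0 * e 0) = (a * a) • e 1 := by
      rw [hmul, h0, prod_eq e hzero h1 h2]
    rw [h1] at h
    rw [h, pow_two]
  refine ⟨a, b, ?_, h0, hφ1⟩
  intro haz
  have h0' : φ (e 1) = 0 := by rw [hφ1, haz]; simp
  have he1 : e 1 = (0 : E) := hbij.1 (by rw [h0', map_zero])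
  exact e.ne_zero 1 he1

end Aux

/-- for the 2-dimensional evolution algebra with `e_1² = e_2`, `e_2² = 0`,
a linear map `ψ` is a local automorphism iff its matrix is `[[α, β],[0, γ²]]` with
`αγ ≠ 0`. -/
theorem stmt15 {K E : Type*} [Field K] [CharZero K] [NonUnitalNonAssocRing E]
    [Module K E] [SMulCommClass K E E] [IsScalarTower K E E]
    (e : Module.Basis (Fin 2) K E)
    (hzero : ∀ i j : Fin 2, i ≠ j → e i * e j = 0)
    (h1 : e 0 * e 0 = e 1) (h2 : e 1 * e 1 = 0)
    (ψ : E →ₗ[K] E) :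
    IsLocalAut ψ ↔ ∃ α β γ : K, α * γ ≠ 0 ∧
      ψ (e 0) = α • e 0 + β • e 1 ∧ ψ (e 1) = (γ ^ 2) • e 1 := by
  constructor
  · intro h
    obtain ⟨φ, hφ, hψ0⟩ := h (e 0)
    obtain ⟨φ', hφ', hψ1⟩ := h (e 1)
    obtain ⟨α, β, hα, hφ0, -⟩ := aut_form e hzero h1 h2 hφ
    obtain ⟨γ, δ, hγ, -, hφ'1⟩ := aut_form e hzero h1 h2 hφ'
    exact ⟨α, β, γ, mul_ne_zero hα hγ, hψ0.trans hφ0, hψ1.trans hφ'1⟩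
  · rintro ⟨α, β, γ, hαγ, hψ0, hψ1⟩ u
    have hα : α ≠ 0 := left_ne_zero_of_mul hαγ
    have hγ : γ ≠ 0 := right_ne_zero_of_mul hαγ
    have hu := repr_two e u
    set x := e.repr u 0 with hx_def
    set y := e.repr u 1 with hy_def
    have hψu : ψ u = (x * α) • e 0 + (x * β + y * γ ^ 2) • e 1 := by
      rw [← hu, map_add, map_smul, map_smul, hψ0, hψ1]
      match_scalars <;> ring
    by_cases hx : x = 0
    · refine ⟨mkAut e γ 0, mkAut_isAut e hzero h1 h2 0 hγ, ?_⟩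
      rw [hψu, ← hu, map_add, map_smul, map_smul, mkAut_e0, mkAut_e1, hx]
      match_scalars <;> ring
    · refine ⟨mkAut e α ((x * β + y * γ ^ 2 - y * α ^ 2) / x),
        mkAut_isAut e hzero h1 h2 _ hα, ?_⟩
      rw [hψu, ← hu, map_add, map_smul, map_smul, mkAut_e0, mkAut_e1]
      match_scalars
      · ring
      · field_simp
        ring
end

section
/- Let E be an n-dimensional nilpotent evolution algebra with maximal nilindex 2^{n−1}+1, where n > 2. Then every local automorphism of E is an automorphism. -/
section Aux2
set_option linter.unusedSectionVars false
set_option maxHeartbeats 1000000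
variable {K E : Type*} [Field K] [NonUnitalNonAssocRing E]
    [Module K E] [SMulCommClass K E E] [IsScalarTower K E E]
    (n : ℕ) (a : Fin n → Fin n → K) (e : Module.Basis (Fin n) K E)

lemma aux_mul (hzero : ∀ i j : Fin n, i ≠ j → e i * e j = 0)
    (u v : E) : u * v = ∑ i : Fin n, (e.repr u i * e.repr v i) • (e i * e i) := by
  conv_lhs => rw [← e.sum_repr u, ← e.sum_repr v]
  rw [Finset.sum_mul_sum]
  refine Finset.sum_congr rfl fun i _ => ?_
  rw [Finset.sum_eq_single i]
  · rw [smul_mul_assoc, mul_smul_comm, smul_smul]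
  · intro j _ hj
    rw [smul_mul_assoc, mul_smul_comm, hzero i j (fun h => hj h.symm), smul_zero, smul_zero]
  · intro h; exact absurd (Finset.mem_univ i) h

lemma aux_repr_sq (hsq : ∀ i : Fin n, e i * e i = ∑ j ∈ Finset.univ.filter (fun j => i < j), a i j • e j)
    (i m : Fin n) : e.repr (e i * e i) m = if i < m then a i m else 0 := by
  rw [hsq i]
  simp only [map_sum, map_smul, Finsupp.coe_finset_sum, Finset.sum_apply, Finsupp.coe_smul,
    Pi.smul_apply, Module.Basis.repr_self, smul_eq_mul, Finsupp.single_apply]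
  simp only [mul_ite, mul_one, mul_zero]
  rw [Finset.sum_ite_eq' (Finset.univ.filter (fun j => i < j)) m (fun j => a i j)]
  simp

lemma aux_repr_mul (hzero : ∀ i j : Fin n, i ≠ j → e i * e j = 0)
    (hsq : ∀ i : Fin n, e i * e i = ∑ j ∈ Finset.univ.filter (fun j => i < j), a i j • e j)
    (u v : E) (m : Fin n) :
    e.repr (u * v) m = ∑ k ∈ Finset.univ.filter (fun k => k < m),
      e.repr u k * e.repr v k * a k m := by
  rw [aux_mul n e hzero u v]
  simp only [map_sum, map_smul, Finsupp.coe_finset_sum, Finset.sum_apply, Finsupp.coe_smul,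
    Pi.smul_apply, smul_eq_mul, aux_repr_sq n a e hsq, mul_ite, mul_zero, Finset.sum_filter]

lemma aux_tri (hne : ∀ i : Fin n, ∀ hi : (i : ℕ) + 1 < n, a i ⟨(i : ℕ) + 1, hi⟩ ≠ 0)
    (g : Fin n → K)
    (hg : ∀ m : Fin n, ∑ k ∈ Finset.univ.filter (fun k => k < m), g k * a k m = 0) :
    ∀ k : Fin n, (k : ℕ) + 1 < n → g k = 0 := by
  have H : ∀ N : ℕ, ∀ k : Fin n, (k : ℕ) = N → (k : ℕ) + 1 < n → g k = 0 := by
    intro N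
    induction N using Nat.strong_induction_on with
    | _ N ih =>
      intro k hkN hk1
      have hm := hg ⟨(k : ℕ) + 1, hk1⟩
      rw [Finset.sum_eq_single_of_mem k ?mem ?other] at hm
      · exact (mul_eq_zero.mp hm).resolve_right (hne k hk1)
      case mem =>
        simp only [Finset.mem_filter, Finset.mem_univ, true_and, Fin.lt_def]
        omega
      case other =>
        intro b hb hbk
        simp only [Finset.mem_filter, Finset.mem_univ, true_and, Fin.lt_def] at hb
        have hbk' : (b : ℕ) ≠ (k : ℕ) := fun h => hbk (Fin.ext h)
        have hblt : (b : ℕ) < N := by omega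
        rw [ih (b : ℕ) (by omega) b rfl (by omega), zero_mul]
  exact fun k => H (k : ℕ) k rfl

lemma aux_heq (hzero : ∀ i j : Fin n, i ≠ j → e i * e j = 0)
    (hsq : ∀ i : Fin n, e i * e i = ∑ j ∈ Finset.univ.filter (fun j => i < j), a i j • e j)
    (φ : E →ₗ[K] E) (hφm : ∀ x y : E, φ (x * y) = φ x * φ y) (i m : Fin n) :
    ∑ k ∈ Finset.univ.filter (fun k => k < m),
        e.repr (φ (e i)) k * e.repr (φ (e i)) k * a k m
      = ∑ j ∈ Finset.univ.filter (fun j => i < j), a i j * e.repr (φ (e j)) m := by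
  have h1 : φ (e i * e i) = φ (e i) * φ (e i) := hφm _ _
  have h2 := aux_repr_mul n a e hzero hsq (φ (e i)) (φ (e i)) m
  rw [← h1] at h2
  rw [← h2]
  rw [hsq i]
  simp only [map_sum, map_smul, Finsupp.coe_finset_sum, Finset.sum_apply, Finsupp.coe_smul,
    Pi.smul_apply, smul_eq_mul]

lemma aux_struct (hn : 2 < n)
    (hzero : ∀ i j : Fin n, i ≠ j → e i * e j = 0)
    (hsq : ∀ i : Fin n, e i * e i = ∑ j ∈ Finset.univ.filter (fun j => i < j), a i j • e j)
    (hne : ∀ i : Fin n, ∀ hi : (i : ℕ) + 1 < n, a i ⟨(i : ℕ) + 1, hi⟩ ≠ 0)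
    (φ : E →ₗ[K] E) (hinj : Function.Injective φ)
    (hφm : ∀ x y : E, φ (x * y) = φ x * φ y) :
    ∀ i : Fin n, (∀ k : Fin n, k ≠ i → (k : ℕ) + 1 < n → e.repr (φ (e i)) k = 0)
      ∧ e.repr (φ (e i)) i ≠ 0 := by
  have horth : ∀ i j : Fin n, i ≠ j → ∀ k : Fin n, (k : ℕ) + 1 < n →
      e.repr (φ (e i)) k * e.repr (φ (e j)) k = 0 := by
    intro i j hij
    apply aux_tri n a hne
    intro m
    have h0 : φ (e i) * φ (e j) = 0 := by rw [← hφm, hzero i j hij, map_zero]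
    have h2 := aux_repr_mul n a e hzero hsq (φ (e i)) (φ (e j)) m
    rw [h0] at h2
    simpa using h2.symm
  have hlastsq : e ⟨n - 1, by omega⟩ * e ⟨n - 1, by omega⟩ = 0 := by
    rw [hsq]
    rw [Finset.filter_false_of_mem, Finset.sum_empty]
    intro j _
    simp only [Fin.lt_def]
    have := j.isLt
    omega
  have hlast : ∀ k : Fin n, (k : ℕ) + 1 < n →
      e.repr (φ (e ⟨n - 1, by omega⟩)) k = 0 := by
    intro k hk
    refine mul_self_eq_zero.mp (aux_tri n a hne
      (fun k => e.repr (φ (e ⟨n - 1, by omega⟩)) k * e.repr (φ (e ⟨n - 1, by omega⟩)) k)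
      ?_ k hk)
    intro m
    have h0 : φ (e ⟨n - 1, by omega⟩) * φ (e ⟨n - 1, by omega⟩) = 0 := by
      rw [← hφm, hlastsq, map_zero]
    have h2 := aux_repr_mul n a e hzero hsq (φ (e ⟨n - 1, by omega⟩))
      (φ (e ⟨n - 1, by omega⟩)) m
    rw [h0] at h2
    simpa using h2.symm
  have hreprne : ∀ i : Fin n, ∃ k, e.repr (φ (e i)) k ≠ 0 := by
    intro i
    by_contra h
    push_neg at h
    have h1 : e.repr (φ (e i)) = 0 := Finsupp.ext fun k => h k
    have h2 : φ (e i) = 0 := e.repr.map_eq_zero_iff.mp h1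
    have h3 : e i = 0 := hinj (by rw [h2, map_zero])
    exact e.ne_zero i h3
  have plast : (∀ k : Fin n, k ≠ ⟨n - 1, by omega⟩ → (k : ℕ) + 1 < n →
        e.repr (φ (e ⟨n - 1, by omega⟩)) k = 0)
      ∧ e.repr (φ (e ⟨n - 1, by omega⟩)) ⟨n - 1, by omega⟩ ≠ 0 := by
    refine ⟨fun k _ hk1 => hlast k hk1, ?_⟩
    obtain ⟨k, hk⟩ := hreprne ⟨n - 1, by omega⟩
    rcases eq_or_ne k ⟨n - 1, by omega⟩ with h | h
    · rwa [h] at hk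
    · have hk' : (k : ℕ) ≠ n - 1 := fun hh => h (Fin.ext hh)
      have := k.isLt
      exact absurd (hlast k (by omega)) hk
  have key : ∀ t : ℕ, ∀ i : Fin n, n - 1 - (i : ℕ) ≤ t →
      (∀ k : Fin n, k ≠ i → (k : ℕ) + 1 < n → e.repr (φ (e i)) k = 0)
        ∧ e.repr (φ (e i)) i ≠ 0 := by
    intro t
    induction t with
    | zero =>
      intro i hi
      have := i.isLt
      have hi' : i = ⟨n - 1, by omega⟩ := Fin.ext (by simp only [Fin.val_mk]; omega)
      rw [hi']; exact plast
    | succ t ih =>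
      intro i hit
      by_cases hil : (i : ℕ) = n - 1
      · have hi' : i = ⟨n - 1, by omega⟩ := Fin.ext (by simp only [Fin.val_mk]; omega)
        rw [hi']; exact plast
      · have hilt := i.isLt
        have hi1 : (i : ℕ) + 1 < n := by omega
        have IH : ∀ j : Fin n, (i : ℕ) < (j : ℕ) →
            (∀ k : Fin n, k ≠ j → (k : ℕ) + 1 < n → e.repr (φ (e j)) k = 0)
              ∧ e.repr (φ (e j)) j ≠ 0 := fun j hj => ih j (by omega)
        -- upper off-diagonal entries vanish
        have ha : ∀ j : Fin n, (i : ℕ) < (j : ℕ) → (j : ℕ) + 1 < n →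
            e.repr (φ (e i)) j = 0 := by
          intro j hj hj1
          have hij : i ≠ j := fun h => absurd (congrArg Fin.val h) (by omega)
          exact (mul_eq_zero.mp (horth i j hij j hj1)).resolve_right (IH j hj).2
        -- lower entries vanish
        have hlow : ∀ k : Fin n, (k : ℕ) < (i : ℕ) → e.repr (φ (e i)) k = 0 := by
          have HB : ∀ N : ℕ, ∀ k : Fin n, (k : ℕ) = N → (k : ℕ) < (i : ℕ) →
              e.repr (φ (e i)) k = 0 := by
            intro N
            induction N using Nat.strong_induction_on with
            | _ N ihN =>
              intro k hkN hki
              have hm1 : (k : ℕ) + 1 < n := by omega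
              have heqm := aux_heq n a e hzero hsq φ hφm i ⟨(k : ℕ) + 1, hm1⟩
              have hR : ∑ j ∈ Finset.univ.filter (fun j => i < j),
                  a i j * e.repr (φ (e j)) ⟨(k : ℕ) + 1, hm1⟩ = 0 := by
                refine Finset.sum_eq_zero fun j hj => ?_
                simp only [Finset.mem_filter, Finset.mem_univ, true_and, Fin.lt_def] at hj
                rw [(IH j hj).1 ⟨(k : ℕ) + 1, hm1⟩
                  (fun hh => absurd (congrArg Fin.val hh) (by simp; omega)) (by simp; omega),
                  mul_zero]
              rw [hR] at heqm
              rw [Finset.sum_eq_single_of_mem k ?mem ?other] at heqm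
              · exact mul_self_eq_zero.mp
                  ((mul_eq_zero.mp heqm).resolve_right (hne k hm1))
              case mem =>
                simp only [Finset.mem_filter, Finset.mem_univ, true_and, Fin.lt_def]
                omega
              case other =>
                intro b hb hbk
                simp only [Finset.mem_filter, Finset.mem_univ, true_and, Fin.lt_def] at hb
                have hbk' : (b : ℕ) ≠ (k : ℕ) := fun h => hbk (Fin.ext h)
                rw [ihN (b : ℕ) (by omega) b rfl (by omega), zero_mul, zero_mul]
          exact fun k hk => HB (k : ℕ) k rfl hk
        -- the diagonal equation at coordinate i+1
        have heqm := aux_heq n a e hzero hsq φ hφm i ⟨(i : ℕ) + 1, hi1⟩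
        rw [Finset.sum_eq_single_of_mem i ?memL ?otherL] at heqm
        rw [Finset.sum_eq_single_of_mem (⟨(i : ℕ) + 1, hi1⟩ : Fin n) ?memR ?otherR] at heqm
        case memL =>
          simp only [Finset.mem_filter, Finset.mem_univ, true_and, Fin.lt_def]
          omega
        case otherL =>
          intro b hb hbi
          simp only [Finset.mem_filter, Finset.mem_univ, true_and, Fin.lt_def] at hb
          have hbi' : (b : ℕ) ≠ (i : ℕ) := fun h => hbi (Fin.ext h)
          rw [hlow b (by omega), zero_mul, zero_mul]
        case memR =>
          simp only [Finset.mem_filter, Finset.mem_univ, true_and, Fin.lt_def]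
          omega
        case otherR =>
          intro b hb hbm
          simp only [Finset.mem_filter, Finset.mem_univ, true_and, Fin.lt_def] at hb
          have hbm' : (b : ℕ) ≠ (i : ℕ) + 1 := fun h => hbm (Fin.ext h)
          · by_cases hm2 : (i : ℕ) + 2 < n
            · rw [(IH b hb).1 ⟨(i : ℕ) + 1, hi1⟩
                (fun hh => by
                  have := congrArg Fin.val hh
                  simp only [Fin.val_mk] at this
                  omega)
                (by show (i : ℕ) + 1 + 1 < n; omega), mul_zero]
            · have hbn := b.isLt
              exact absurd (Fin.ext (show (b : ℕ) = (i : ℕ) + 1 by omega)) hbm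
        have hXm : e.repr (φ (e ⟨(i : ℕ) + 1, hi1⟩)) ⟨(i : ℕ) + 1, hi1⟩ ≠ 0 :=
          (IH ⟨(i : ℕ) + 1, hi1⟩ (by show (i : ℕ) < (i : ℕ) + 1; omega)).2
        have hXii : e.repr (φ (e i)) i ≠ 0 := by
          intro h
          rw [h, zero_mul, zero_mul] at heqm
          exact hXm ((mul_eq_zero.mp heqm.symm).resolve_left (hne i hi1))
        refine ⟨fun k hk hk1 => ?_, hXii⟩
        rcases lt_trichotomy ((k : ℕ)) ((i : ℕ)) with h | h | h
        · exact hlow k h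
        · exact absurd (Fin.ext h) hk
        · exact ha k h hk1
  intro i
  exact key n i (by omega)

end Aux2

lemma aux_vec_eq {K E : Type*} [Field K] [NonUnitalNonAssocRing E] [Module K E]
    {n : ℕ} (e : Module.Basis (Fin n) K E) (x y : E)
    (h : ∀ k : Fin n, e.repr x k = e.repr y k) : x = y :=
  e.repr.injective (Finsupp.ext h)

section Aux3
set_option linter.unusedSectionVars false
set_option maxHeartbeats 1000000
variable {K E : Type*} [Field K] [NonUnitalNonAssocRing E]
    [Module K E] [SMulCommClass K E E] [IsScalarTower K E E]
    (n : ℕ) (a : Fin n → Fin n → K) (e : Module.Basis (Fin n) K E)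

lemma aux_S3 (hn : 2 < n)
    (hzero : ∀ i j : Fin n, i ≠ j → e i * e j = 0)
    (hsq : ∀ i : Fin n, e i * e i = ∑ j ∈ Finset.univ.filter (fun j => i < j), a i j • e j)
    (hne : ∀ i : Fin n, ∀ hi : (i : ℕ) + 1 < n, a i ⟨(i : ℕ) + 1, hi⟩ ≠ 0)
    (φ : E →ₗ[K] E) (hinj : Function.Injective φ)
    (hφm : ∀ x y : E, φ (x * y) = φ x * φ y)
    (i : Fin n) (hi1 : (i : ℕ) + 1 < n) :
    e.repr (φ (e ⟨(i : ℕ) + 1, hi1⟩)) ⟨(i : ℕ) + 1, hi1⟩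
      = e.repr (φ (e i)) i * e.repr (φ (e i)) i := by
  have hstr := aux_struct n a e hn hzero hsq hne φ hinj hφm
  have heqm := aux_heq n a e hzero hsq φ hφm i ⟨(i : ℕ) + 1, hi1⟩
  rw [Finset.sum_eq_single_of_mem i ?memL ?otherL] at heqm
  rw [Finset.sum_eq_single_of_mem (⟨(i : ℕ) + 1, hi1⟩ : Fin n) ?memR ?otherR] at heqm
  · exact mul_left_cancel₀ (hne i hi1) (by rw [← heqm]; ring)
  case memL =>
    simp only [Finset.mem_filter, Finset.mem_univ, true_and, Fin.lt_def]
    omega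
  case otherL =>
    intro b hb hbi
    simp only [Finset.mem_filter, Finset.mem_univ, true_and, Fin.lt_def, Fin.val_mk] at hb
    rw [(hstr i).1 b hbi (by omega), zero_mul, zero_mul]
  case memR =>
    simp only [Finset.mem_filter, Finset.mem_univ, true_and, Fin.lt_def]
    omega
  case otherR =>
    intro b hb hbm
    simp only [Finset.mem_filter, Finset.mem_univ, true_and, Fin.lt_def] at hb
    have hbm' : (b : ℕ) ≠ (i : ℕ) + 1 := fun h => hbm (Fin.ext h)
    by_cases hm2 : (i : ℕ) + 2 < n
    · rw [(hstr b).1 ⟨(i : ℕ) + 1, hi1⟩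
        (fun hh => by
          have := congrArg Fin.val hh
          simp only [Fin.val_mk] at this
          omega)
        (by show (i : ℕ) + 1 + 1 < n; omega), mul_zero]
    · have hbn := b.isLt
      exact absurd (Fin.ext (show (b : ℕ) = (i : ℕ) + 1 by omega)) hbm

lemma aux_S4 (hn : 2 < n)
    (hzero : ∀ i j : Fin n, i ≠ j → e i * e j = 0)
    (hsq : ∀ i : Fin n, e i * e i = ∑ j ∈ Finset.univ.filter (fun j => i < j), a i j • e j)
    (hne : ∀ i : Fin n, ∀ hi : (i : ℕ) + 1 < n, a i ⟨(i : ℕ) + 1, hi⟩ ≠ 0)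
    (φ : E →ₗ[K] E) (hinj : Function.Injective φ)
    (hφm : ∀ x y : E, φ (x * y) = φ x * φ y)
    (i : Fin n) (hi1 : (i : ℕ) + 1 < n) :
    e.repr (φ (e i)) i * e.repr (φ (e i)) i * a i ⟨n - 1, by omega⟩
      = ∑ j ∈ Finset.univ.filter (fun j => i < j),
          a i j * e.repr (φ (e j)) ⟨n - 1, by omega⟩ := by
  have hstr := aux_struct n a e hn hzero hsq hne φ hinj hφm
  have heqm := aux_heq n a e hzero hsq φ hφm i ⟨n - 1, by omega⟩
  rw [Finset.sum_eq_single_of_mem i ?memL ?otherL] at heqm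
  · exact heqm
  case memL =>
    simp only [Finset.mem_filter, Finset.mem_univ, true_and, Fin.lt_def, Fin.val_mk]
    omega
  case otherL =>
    intro b hb hbi
    simp only [Finset.mem_filter, Finset.mem_univ, true_and, Fin.lt_def, Fin.val_mk] at hb
    rw [(hstr i).1 b hbi (by omega), zero_mul, zero_mul]

lemma aux_U (hn : 2 < n)
    (hzero : ∀ i j : Fin n, i ≠ j → e i * e j = 0)
    (hsq : ∀ i : Fin n, e i * e i = ∑ j ∈ Finset.univ.filter (fun j => i < j), a i j • e j)
    (hne : ∀ i : Fin n, ∀ hi : (i : ℕ) + 1 < n, a i ⟨(i : ℕ) + 1, hi⟩ ≠ 0)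
    (φ₁ φ₂ : E →ₗ[K] E) (hinj₁ : Function.Injective φ₁)
    (hφm₁ : ∀ x y : E, φ₁ (x * y) = φ₁ x * φ₁ y)
    (hinj₂ : Function.Injective φ₂)
    (hφm₂ : ∀ x y : E, φ₂ (x * y) = φ₂ x * φ₂ y)
    (j : Fin n) (hj : e.repr (φ₁ (e j)) j = e.repr (φ₂ (e j)) j) :
    (∀ k : Fin n, (j : ℕ) ≤ (k : ℕ) → e.repr (φ₁ (e k)) k = e.repr (φ₂ (e k)) k)
    ∧ (∀ k : Fin n, (j : ℕ) ≤ (k : ℕ) → 0 < (k : ℕ) →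
        e.repr (φ₁ (e k)) ⟨n - 1, by omega⟩ = e.repr (φ₂ (e k)) ⟨n - 1, by omega⟩) := by
  have hU1 : ∀ k : Fin n, (j : ℕ) ≤ (k : ℕ) →
      e.repr (φ₁ (e k)) k = e.repr (φ₂ (e k)) k := by
    have H : ∀ t : ℕ, ∀ k : Fin n, (k : ℕ) ≤ (j : ℕ) + t → (j : ℕ) ≤ (k : ℕ) →
        e.repr (φ₁ (e k)) k = e.repr (φ₂ (e k)) k := by
      intro t
      induction t with
      | zero =>
        intro k hk hjk
        have : k = j := Fin.ext (by omega)
        rw [this]; exact hj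
      | succ t ih =>
        intro k hk hjk
        by_cases hk' : (k : ℕ) ≤ (j : ℕ) + t
        · exact ih k hk' hjk
        · have hk0 : 0 < (k : ℕ) := by omega
          have hklt := k.isLt
          obtain ⟨iv, hiv⟩ : ∃ iv : ℕ, (k : ℕ) = iv + 1 := ⟨(k : ℕ) - 1, by omega⟩
          have hivn : iv < n := by omega
          have hi1 : ((⟨iv, hivn⟩ : Fin n) : ℕ) + 1 < n := show iv + 1 < n by omega
          have e1 := aux_S3 n a e hn hzero hsq hne φ₁ hinj₁ hφm₁ ⟨iv, hivn⟩ hi1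
          have e2 := aux_S3 n a e hn hzero hsq hne φ₂ hinj₂ hφm₂ ⟨iv, hivn⟩ hi1
          have hik : (⟨((⟨iv, hivn⟩ : Fin n) : ℕ) + 1, hi1⟩ : Fin n) = k :=
            Fin.ext (show iv + 1 = (k : ℕ) from hiv.symm)
          rw [hik] at e1 e2
          rw [e1, e2, ih ⟨iv, hivn⟩ (show iv ≤ (j : ℕ) + t by omega)
            (show (j : ℕ) ≤ iv by omega)]
    exact fun k hjk => H (k : ℕ) k (by omega) hjk
  refine ⟨hU1, ?_⟩
  have H : ∀ t : ℕ, ∀ k : Fin n, n - 1 - (k : ℕ) ≤ t → (j : ℕ) ≤ (k : ℕ) → 0 < (k : ℕ) →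
      e.repr (φ₁ (e k)) ⟨n - 1, by omega⟩ = e.repr (φ₂ (e k)) ⟨n - 1, by omega⟩ := by
    intro t
    induction t with
    | zero =>
      intro k hk hjk hk0
      have hklt := k.isLt
      have hkl : k = ⟨n - 1, by omega⟩ := Fin.ext (show (k : ℕ) = n - 1 by omega)
      rw [hkl] at hjk ⊢
      exact hU1 ⟨n - 1, by omega⟩ hjk
    | succ t ih =>
      intro k hk hjk hk0
      have hklt := k.isLt
      by_cases hkl' : (k : ℕ) = n - 1
      · have hkl : k = ⟨n - 1, by omega⟩ := Fin.ext (show (k : ℕ) = n - 1 by omega)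
        rw [hkl] at hjk ⊢
        exact hU1 ⟨n - 1, by omega⟩ hjk
      · obtain ⟨iv, hiv⟩ : ∃ iv : ℕ, (k : ℕ) = iv + 1 := ⟨(k : ℕ) - 1, by omega⟩
        have hivn : iv < n := by omega
        have hi1 : ((⟨iv, hivn⟩ : Fin n) : ℕ) + 1 < n := show iv + 1 < n by omega
        have e1 := aux_S4 n a e hn hzero hsq hne φ₁ hinj₁ hφm₁ ⟨iv, hivn⟩ hi1
        have e2 := aux_S4 n a e hn hzero hsq hne φ₂ hinj₂ hφm₂ ⟨iv, hivn⟩ hi1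
        have s1 := aux_S3 n a e hn hzero hsq hne φ₁ hinj₁ hφm₁ ⟨iv, hivn⟩ hi1
        have s2 := aux_S3 n a e hn hzero hsq hne φ₂ hinj₂ hφm₂ ⟨iv, hivn⟩ hi1
        have hik : (⟨((⟨iv, hivn⟩ : Fin n) : ℕ) + 1, hi1⟩ : Fin n) = k :=
          Fin.ext (show iv + 1 = (k : ℕ) from hiv.symm)
        rw [hik] at s1 s2
        rw [← s1] at e1
        rw [← s2] at e2
        have hkk := hU1 k hjk
        rw [hkk] at e1
        have hsum : ∑ j' ∈ Finset.univ.filter (fun j' => (⟨iv, hivn⟩ : Fin n) < j'),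
            a ⟨iv, hivn⟩ j' *
              (e.repr (φ₁ (e j')) ⟨n - 1, by omega⟩ - e.repr (φ₂ (e j')) ⟨n - 1, by omega⟩) = 0 := by
          have h12 := e1.symm.trans e2
          simp only [mul_sub, Finset.sum_sub_distrib]
          rw [h12, sub_self]
        rw [Finset.sum_eq_single_of_mem k ?mem ?other] at hsum
        · have hanz : a ⟨iv, hivn⟩ k ≠ 0 := by
            rw [← hik]
            exact hne ⟨iv, hivn⟩ hi1
          have := (mul_eq_zero.mp hsum).resolve_left hanz
          exact sub_eq_zero.mp this
        case mem =>
          simp only [Finset.mem_filter, Finset.mem_univ, true_and, Fin.lt_def, Fin.val_mk]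
          omega
        case other =>
          intro b hb hbk
          simp only [Finset.mem_filter, Finset.mem_univ, true_and, Fin.lt_def, Fin.val_mk] at hb
          have hbk' : (b : ℕ) ≠ (k : ℕ) := fun h => hbk (Fin.ext h)
          rw [ih b (by omega) (by omega) (by omega), sub_self, mul_zero]
  exact fun k hjk hk0 => H n k (by omega) hjk hk0

end Aux3

set_option maxHeartbeats 1000000 in
/-- for an `n`-dimensional nilpotent evolution algebra of maximal
nilindex `2^{n−1}+1` with `n > 2`, every local automorphism is an automorphism. -/
theorem stmt16 {K E : Type*} [Field K] [CharZero K] [NonUnitalNonAssocRing E]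
    [Module K E] [SMulCommClass K E E] [IsScalarTower K E E]
    (n : ℕ) (hn : 2 < n) (a : Fin n → Fin n → K) (e : Module.Basis (Fin n) K E)
    (hzero : ∀ i j : Fin n, i ≠ j → e i * e j = 0)
    (hsq : ∀ i : Fin n, e i * e i = ∑ j ∈ Finset.univ.filter (fun j => i < j), a i j • e j)
    (hne : ∀ i : Fin n, ∀ hi : (i : ℕ) + 1 < n, a i ⟨(i : ℕ) + 1, hi⟩ ≠ 0)
    (ψ : E →ₗ[K] E) (hψ : IsLocalAut ψ) :
    IsAut ψ := by
  choose Φ hΦaut hΦ using hψ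
  set u₀ : E := ∑ i : Fin n, e i with hu₀
  have str : ∀ u : E, ∀ i : Fin n,
      (∀ k : Fin n, k ≠ i → (k : ℕ) + 1 < n → e.repr (Φ u (e i)) k = 0)
        ∧ e.repr (Φ u (e i)) i ≠ 0 :=
    fun u => aux_struct n a e hn hzero hsq hne (Φ u) (hΦaut u).1.1 (hΦaut u).2
  have U : ∀ u v : E, ∀ j : Fin n,
      e.repr (Φ u (e j)) j = e.repr (Φ v (e j)) j →
      (∀ k : Fin n, (j : ℕ) ≤ (k : ℕ) → e.repr (Φ u (e k)) k = e.repr (Φ v (e k)) k)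
      ∧ (∀ k : Fin n, (j : ℕ) ≤ (k : ℕ) → 0 < (k : ℕ) →
          e.repr (Φ u (e k)) ⟨n - 1, by omega⟩ = e.repr (Φ v (e k)) ⟨n - 1, by omega⟩) :=
    fun u v j hj => aux_U n a e hn hzero hsq hne (Φ u) (Φ v)
      (hΦaut u).1.1 (hΦaut u).2 (hΦaut v).1.1 (hΦaut v).2 j hj
  have hsum : ∀ m : Fin n,
      ∑ i : Fin n, e.repr (Φ (e i) (e i)) m = ∑ i : Fin n, e.repr (Φ u₀ (e i)) m := by
    intro m
    have h1 : ψ u₀ = ∑ i : Fin n, Φ (e i) (e i) := by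
      rw [hu₀, map_sum]
      exact Finset.sum_congr rfl fun i _ => hΦ (e i)
    have h3 : (∑ i : Fin n, Φ (e i) (e i)) = ∑ i : Fin n, Φ u₀ (e i) := by
      rw [← h1, hΦ u₀, hu₀, map_sum]
    have := congrArg (fun w : E => e.repr w m) h3
    simpa only [map_sum, Finsupp.coe_finset_sum, Finset.sum_apply] using this
  have star : ∀ m : Fin n, (m : ℕ) + 1 < n →
      e.repr (Φ (e m) (e m)) m = e.repr (Φ u₀ (e m)) m := by
    intro m hm
    have h := hsum m
    rw [Finset.sum_eq_single_of_mem m (Finset.mem_univ m)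
      (fun b _ hbm => (str (e b) b).1 m (fun hh => hbm hh.symm) hm)] at h
    rw [Finset.sum_eq_single_of_mem m (Finset.mem_univ m)
      (fun b _ hbm => (str u₀ b).1 m (fun hh => hbm hh.symm) hm)] at h
    exact h
  have step_mid : ∀ m : Fin n, 0 < (m : ℕ) → (m : ℕ) + 1 < n → ψ (e m) = Φ u₀ (e m) := by
    intro m hm0 hm1
    rw [hΦ (e m)]
    apply aux_vec_eq e
    intro k
    have hUm := U (e m) u₀ m (star m hm1)
    rcases eq_or_ne k m with rfl | hkm
    · exact star k hm1
    · by_cases hk1 : (k : ℕ) + 1 < n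
      · rw [(str (e m) m).1 k hkm hk1, (str u₀ m).1 k hkm hk1]
      · have hkl : k = ⟨n - 1, by omega⟩ :=
          Fin.ext (show (k : ℕ) = n - 1 by have := k.isLt; omega)
        rw [hkl]
        exact hUm.2 m le_rfl hm0
  have hsl1 : n - 2 < n := by omega
  have hsl2 : ((⟨n - 2, hsl1⟩ : Fin n) : ℕ) + 1 < n := show n - 2 + 1 < n by omega
  have hlstne : (⟨n - 2, hsl1⟩ : Fin n) ≠ ⟨n - 1, by omega⟩ :=
    fun h => by have := congrArg Fin.val h; simp only [Fin.val_mk] at this; omega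
  have step_last : ψ (e ⟨n - 1, by omega⟩) = Φ u₀ (e ⟨n - 1, by omega⟩) := by
    set sl : Fin n := ⟨n - 2, hsl1⟩ with hsldef
    set lst : Fin n := ⟨n - 1, by omega⟩ with hlstdef
    set v : E := e sl + e lst with hvdef
    have hv3 : Φ (e sl) (e sl) + Φ (e lst) (e lst) = Φ v (e sl) + Φ v (e lst) := by
      have l : ψ v = Φ (e sl) (e sl) + Φ (e lst) (e lst) := by
        rw [hvdef, map_add, hΦ (e sl), hΦ (e lst)]
      have r : Φ v v = Φ v (e sl) + Φ v (e lst) := by rw [hvdef, map_add]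
      rw [← l, hΦ v, r]
    have hcoord : ∀ k : Fin n,
        e.repr (Φ (e sl) (e sl)) k + e.repr (Φ (e lst) (e lst)) k
          = e.repr (Φ v (e sl)) k + e.repr (Φ v (e lst)) k := by
      intro k
      have := congrArg (fun w : E => e.repr w k) hv3
      simpa only [map_add, Finsupp.add_apply] using this
    have hA : e.repr (Φ (e sl) (e sl)) sl = e.repr (Φ v (e sl)) sl := by
      have h := hcoord sl
      rw [(str (e lst) lst).1 sl hlstne hsl2, (str v lst).1 sl hlstne hsl2,
        add_zero, add_zero] at h
      exact h
    have hB : e.repr (Φ v (e sl)) sl = e.repr (Φ u₀ (e sl)) sl := by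
      rw [← hA]; exact star sl hsl2
    have hUv := U v u₀ sl hB
    have hUsl := U (e sl) v sl hA
    have hsl0 : 0 < (sl : ℕ) := show 0 < n - 2 by omega
    have hgam : e.repr (Φ (e sl) (e sl)) lst = e.repr (Φ v (e sl)) lst :=
      hUsl.2 sl le_rfl hsl0
    have hlstco : e.repr (Φ (e lst) (e lst)) lst = e.repr (Φ v (e lst)) lst := by
      have h := hcoord lst
      rw [hgam] at h
      exact add_left_cancel h
    have hC : e.repr (Φ (e lst) (e lst)) lst = e.repr (Φ u₀ (e lst)) lst := by
      rw [hlstco]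
      exact hUv.1 lst (show n - 2 ≤ n - 1 by omega)
    rw [hΦ (e lst)]
    apply aux_vec_eq e
    intro k
    rcases eq_or_ne k lst with rfl | hkl
    · exact hC
    · have hk1 : (k : ℕ) + 1 < n := by
        have := k.isLt
        have : (k : ℕ) ≠ n - 1 := fun h => hkl (Fin.ext h)
        omega
      rw [(str (e lst) lst).1 k hkl hk1, (str u₀ lst).1 k hkl hk1]
  have hall : ∀ i : Fin n, ψ (e i) = Φ u₀ (e i) := by
    have hz : ψ (e ⟨0, by omega⟩) = Φ u₀ (e ⟨0, by omega⟩) := by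
      set z : Fin n := ⟨0, by omega⟩ with hzdef
      set lst : Fin n := ⟨n - 1, by omega⟩ with hlstdef
      have hrest : ∀ i : Fin n, i ≠ z →
          e.repr (Φ (e i) (e i)) lst = e.repr (Φ u₀ (e i)) lst := by
        intro i hiz
        have hi0 : 0 < (i : ℕ) := by
          have : (i : ℕ) ≠ 0 := fun h => hiz (Fin.ext h)
          omega
        have hvec : ψ (e i) = Φ u₀ (e i) := by
          by_cases hi1 : (i : ℕ) + 1 < n
          · exact step_mid i hi0 hi1
          · have : i = lst := Fin.ext (show (i : ℕ) = n - 1 by have := i.isLt; omega)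
            rw [this]; exact step_last
        have := (hΦ (e i)).symm.trans hvec
        exact congrArg (fun w : E => e.repr w lst) this
      have h := hsum lst
      rw [← Finset.add_sum_erase _ _ (Finset.mem_univ z),
        ← Finset.add_sum_erase _ (fun i => e.repr (Φ u₀ (e i)) lst) (Finset.mem_univ z)] at h
      rw [Finset.sum_congr rfl (fun i hi => hrest i (Finset.ne_of_mem_erase hi))] at h
      have hzz := add_right_cancel h
      rw [hΦ (e z)]
      apply aux_vec_eq e
      intro k
      rcases eq_or_ne k z with rfl | hkz
      · exact star z (show (0 : ℕ) + 1 < n by omega)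
      · by_cases hk1 : (k : ℕ) + 1 < n
        · rw [(str (e z) z).1 k hkz hk1, (str u₀ z).1 k hkz hk1]
        · have : k = lst := Fin.ext (show (k : ℕ) = n - 1 by have := k.isLt; omega)
          rw [this]; exact hzz
    intro i
    by_cases hi0 : (i : ℕ) = 0
    · have : i = ⟨0, by omega⟩ := Fin.ext hi0
      rw [this]; exact hz
    · by_cases hi1 : (i : ℕ) + 1 < n
      · exact step_mid i (by omega) hi1
      · have : i = ⟨n - 1, by omega⟩ := Fin.ext (show (i : ℕ) = n - 1 by have := i.isLt; omega)
        rw [this]; exact step_last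
  have : ψ = Φ u₀ := Module.Basis.ext e hall
  rw [this]
  exact hΦaut u₀
end
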